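/- arXiv:2107.10918 — 5 statements merged into one kernel-verified Lean document; each statement's English description precedes it below -/
import Mathlib

section
/- Let E be a number field, let n ≥ 1, and let b ∈ Eⁿ be a column vector whose coordinates span E as a ℚ-vector space. Suppose g is an n × n matrix with integer entries and determinant ±1 (i.e. g ∈ GL_n(ℤ)), and suppose g·b = x·b for some x ∈ E. Then x is a unit of the ring of integers 𝓞_E of E; that is, x ∈ 𝓞_E and x⁻¹ ∈ 𝓞_E. -/
open Polynomial Matrix

lemma eval_charpoly' {n : ℕ} {E : Type*} [Field E] (M : Matrix (Fin n) (Fin n) E) (x : E) :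
    M.charpoly.eval x = (x • (1 : Matrix (Fin n) (Fin n) E) - M).det := by
  rw [Matrix.charpoly, ← Polynomial.coe_evalRingHom, RingHom.map_det]
  congr 1
  ext i j
  by_cases h : i = j <;> simp [charmatrix, Matrix.one_apply, h, Matrix.diagonal_apply]

lemma aux_int {n : ℕ} {E : Type*} [Field E] (b : Fin n → E) (hb : b ≠ 0)
    (g : Matrix (Fin n) (Fin n) ℤ) (y : E)
    (h : (g.map ((↑) : ℤ → E)).mulVec b = y • b) : IsIntegral ℤ y := by
  have h0 : (y • (1 : Matrix (Fin n) (Fin n) E) - g.map ((↑) : ℤ → E)).mulVec b = 0 := by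
    simp [Matrix.sub_mulVec, Matrix.smul_mulVec, h]
  have hdet : (y • (1 : Matrix (Fin n) (Fin n) E) - g.map ((↑) : ℤ → E)).det = 0 := by
    rw [← Matrix.exists_mulVec_eq_zero_iff]
    exact ⟨b, hb, h0⟩
  have key : ((g.map ((↑) : ℤ → E)).charpoly).eval y = 0 := by rw [eval_charpoly', hdet]
  refine ⟨g.charpoly, g.charpoly_monic, ?_⟩
  have hmap := Matrix.charpoly_map g (algebraMap ℤ E)
  rw [eval₂_eq_eval_map, ← hmap]
  exact key

/-- Let `E` be a number field, `n ≥ 1`, and `b ∈ Eⁿ` a column vector whose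
coordinates span `E` as a `ℚ`-vector space.  If `g` is an `n × n` integer matrix of
determinant `±1` and `g · b = x • b` for some `x ∈ E`, then `x` is a unit of the ring of
integers of `E`, i.e. both `x` and `x⁻¹` are integral over `ℤ`. -/
theorem stmt_1 (E : Type*) [Field E] [NumberField E] (n : ℕ) (hn : 1 ≤ n)
    (b : Fin n → E) (hb : Submodule.span ℚ (Set.range b) = ⊤)
    (g : Matrix (Fin n) (Fin n) ℤ) (hg : g.det = 1 ∨ g.det = -1)
    (x : E) (hx : (g.map ((↑) : ℤ → E)).mulVec b = x • b) :
    IsIntegral ℤ x ∧ IsIntegral ℤ x⁻¹ := by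
  have hne : Nonempty (Fin n) := ⟨⟨0, hn⟩⟩
  have hb0 : b ≠ 0 := by
    rintro rfl
    have h1 : (1 : E) ∈ Submodule.span ℚ (Set.range (0 : Fin n → E)) :=
      hb ▸ Submodule.mem_top
    simp at h1
  have hdet2 : g.det * g.det = 1 := by rcases hg with h | h <;> rw [h] <;> ring
  have hdetE : ((g.det : ℤ) : E) ≠ 0 := by
    rcases hg with h | h <;> rw [h] <;> norm_num
  have hx0 : x ≠ 0 := by
    rintro rfl
    rw [zero_smul] at hx
    have hd : (g.map ((↑) : ℤ → E)).det = 0 :=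
      (Matrix.exists_mulVec_eq_zero_iff).mp ⟨b, hb0, hx⟩
    exact hdetE ((RingHom.map_det (Int.castRingHom E) g).trans hd)
  set g' : Matrix (Fin n) (Fin n) ℤ := g.det • g.adjugate with hg'
  have hmul : g' * g = 1 := by
    rw [hg', Matrix.smul_mul, Matrix.adjugate_mul, smul_smul, hdet2, one_smul]
  have hmulE : (g'.map ((↑) : ℤ → E)) * (g.map ((↑) : ℤ → E)) = 1 := by
    have h := congrArg ((Int.castRingHom E).mapMatrix) hmul
    rw [_root_.map_mul, _root_.map_one] at h
    exact h
  have h1 : x • (g'.map ((↑) : ℤ → E)).mulVec b = b := by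
    rw [← Matrix.mulVec_smul, ← hx, Matrix.mulVec_mulVec, hmulE, Matrix.one_mulVec]
  have hx' : (g'.map ((↑) : ℤ → E)).mulVec b = x⁻¹ • b := by
    calc (g'.map ((↑) : ℤ → E)).mulVec b
        = x⁻¹ • (x • (g'.map ((↑) : ℤ → E)).mulVec b) := by
          rw [smul_smul, inv_mul_cancel₀ hx0, one_smul]
      _ = x⁻¹ • b := by rw [h1]
  exact ⟨aux_int b hb0 g x hx, aux_int b hb0 g' x⁻¹ hx'⟩
end

section
/- Let n ≥ 2 and N ≥ 1 be integers. Let u, v ∈ ℤⁿ be primitive column vectors such that u ≡ v (mod N) coordinatewise. Then there exists g ∈ SL_n(ℤ) with g ≡ I (mod N) entrywise (i.e. g lies in the principal congruence subgroup Γ(N)) such that g·u = v. -/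
open Matrix Finset

/-- Prime-avoidance: if no prime divides `a`, `b`, `m` simultaneously and `m ≠ 0`,
then some `a + b*k` is coprime to `m`. -/
lemma dagger (a b m : ℤ) (hm : m ≠ 0)
    (h : ∀ p : ℕ, p.Prime → (p:ℤ) ∣ a → (p:ℤ) ∣ b → (p:ℤ) ∣ m → False) :
    ∃ k : ℤ, Int.gcd (a + b * k) m = 1 := by
  classical
  set K : ℕ := ∏ p ∈ m.natAbs.primeFactors, (if (p:ℤ) ∣ a then 1 else p) with hK
  refine ⟨(K:ℤ), ?_⟩
  by_contra hg
  obtain ⟨q, hq, hqdvd⟩ := Nat.exists_prime_and_dvd hg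
  have hqgcd : (q:ℤ) ∣ (Int.gcd (a + b * K) m : ℤ) := Int.natCast_dvd_natCast.mpr hqdvd
  have hqa_bk : (q:ℤ) ∣ a + b * K := hqgcd.trans (Int.gcd_dvd_left _ _)
  have hqm : (q:ℤ) ∣ m := hqgcd.trans (Int.gcd_dvd_right _ _)
  have hqprime : Prime (q:ℤ) := by rw [Int.prime_iff_natAbs_prime]; simpa using hq
  by_cases hqa : (q:ℤ) ∣ a
  · have hqbK : (q:ℤ) ∣ b * K := by
      have := dvd_sub hqa_bk hqa
      simpa using this
    rcases hqprime.dvd_mul.mp hqbK with hqb | hqK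
    · exact h q hq hqa hqb hqm
    · have hqKn : q ∣ K := Int.natCast_dvd_natCast.mp hqK
      obtain ⟨p, hp_mem, hqp⟩ := (hq.prime.dvd_finset_prod_iff _).mp hqKn
      by_cases hpa : (p:ℤ) ∣ a
      · rw [if_pos hpa] at hqp
        exact hq.ne_one (Nat.dvd_one.mp hqp)
      · rw [if_neg hpa] at hqp
        have hqep : q = p :=
          (Nat.prime_dvd_prime_iff_eq hq (Nat.prime_of_mem_primeFactors hp_mem)).mp hqp
        exact hpa (hqep ▸ hqa)
  · have hqmem : q ∈ m.natAbs.primeFactors :=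
      Nat.mem_primeFactors.mpr ⟨hq, by rwa [← Int.natAbs_dvd_natAbs, Int.natAbs_natCast] at hqm,
        Int.natAbs_ne_zero.mpr hm⟩
    have hqK : q ∣ K := by
      have h2 : (if (q:ℤ) ∣ a then 1 else q) ∣
          ∏ p ∈ m.natAbs.primeFactors, (if (p:ℤ) ∣ a then 1 else p) :=
        Finset.dvd_prod_of_mem (fun p : ℕ => if (p:ℤ) ∣ a then (1:ℕ) else p) hqmem
      rw [if_neg hqa] at h2
      exact h2
    have hqa' : (q:ℤ) ∣ a := by
      have h1 : (q:ℤ) ∣ b * K := Dvd.dvd.mul_left (Int.natCast_dvd_natCast.mpr hqK) b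
      have := dvd_sub hqa_bk h1
      simpa using this
    exact hqa hqa'

/-- Bezout-type representation of a finset gcd over ℤ. -/
lemma exists_gcd_combo {ι : Type*} [DecidableEq ι] (S : Finset ι) (f : ι → ℤ) :
    ∃ t : ι → ℤ, (∀ j, j ∉ S → t j = 0) ∧ ∑ j ∈ S, t j * f j = S.gcd f := by
  classical
  induction S using Finset.induction_on with
  | empty => exact ⟨fun _ => 0, fun _ _ => rfl, by simp⟩
  | @insert a S ha ih =>
    obtain ⟨t, ht0, htsum⟩ := ih
    refine ⟨fun j => if j = a then Int.gcdA (f a) (S.gcd f)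
      else Int.gcdB (f a) (S.gcd f) * t j, ?_, ?_⟩
    · intro j hj
      have hja : j ≠ a := fun h => hj (by rw [h]; exact Finset.mem_insert_self a S)
      have hjS : j ∉ S := fun h => hj (Finset.mem_insert_of_mem h)
      simp [hja, ht0 j hjS]
    · rw [Finset.sum_insert ha, Finset.gcd_insert]
      have : ∀ j ∈ S, (if j = a then Int.gcdA (f a) (S.gcd f)
          else Int.gcdB (f a) (S.gcd f) * t j) * f j
          = Int.gcdB (f a) (S.gcd f) * (t j * f j) := by
        intro j hj
        rw [if_neg (fun h => ha (by rwa [h] at hj)), mul_assoc]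
      rw [Finset.sum_congr rfl this, ← Finset.mul_sum, htsum,
        show (fun j => if j = a then Int.gcdA (f a) (S.gcd f)
          else Int.gcdB (f a) (S.gcd f) * t j) a = Int.gcdA (f a) (S.gcd f) from by simp]
      rw [← Int.coe_gcd, Int.gcd_eq_gcd_ab]
      ring
section MatrixTools

variable {n : ℕ}

/-- mulVec of a rank-≤2 update. -/
lemma mulVec_one_add {m : ℕ} (U : Matrix (Fin n) (Fin m) ℤ) (V : Matrix (Fin m) (Fin n) ℤ)
    (x : Fin n → ℤ) :
    ((1 : Matrix (Fin n) (Fin n) ℤ) + U * V) *ᵥ x = x + U *ᵥ (V *ᵥ x) := by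
  rw [Matrix.add_mulVec, Matrix.one_mulVec, ← Matrix.mulVec_mulVec]

/-- inverse of a unipotent rank-≤2 update. -/
lemma one_add_neg_mul {m : ℕ} (U : Matrix (Fin n) (Fin m) ℤ) (V : Matrix (Fin m) (Fin n) ℤ)
    (h : V * U = 0) :
    ((1 : Matrix (Fin n) (Fin n) ℤ) + (-U) * V) * (1 + U * V) = 1 := by
  have h2 : U * V * (U * V) = 0 := by
    rw [Matrix.mul_assoc U V (U * V), ← Matrix.mul_assoc V U V, h, Matrix.zero_mul,
      Matrix.mul_zero]
  rw [Matrix.neg_mul, Matrix.add_mul, Matrix.one_mul, Matrix.mul_add, Matrix.mul_one,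
    Matrix.neg_mul, h2, neg_zero]
  abel

lemma det_one_add_neg_mul {m : ℕ} (U : Matrix (Fin n) (Fin m) ℤ) (V : Matrix (Fin m) (Fin n) ℤ)
    (h : V * U = 0) :
    ((1 : Matrix (Fin n) (Fin n) ℤ) + (-U) * V).det = 1 ∧
    ((1 : Matrix (Fin n) (Fin n) ℤ) + U * V).det = 1 := by
  constructor
  · rw [Matrix.det_one_add_mul_comm, Matrix.mul_neg, h, neg_zero, add_zero, Matrix.det_one]
  · rw [Matrix.det_one_add_mul_comm, h, add_zero, Matrix.det_one]

/-- product of matrices ≡ 1 mod N is ≡ 1 mod N. -/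
lemma cong_one_mul (c : ℤ) (A B : Matrix (Fin n) (Fin n) ℤ)
    (hA : ∀ i j, c ∣ A i j - (1 : Matrix (Fin n) (Fin n) ℤ) i j)
    (hB : ∀ i j, c ∣ B i j - (1 : Matrix (Fin n) (Fin n) ℤ) i j) :
    ∀ i j, c ∣ (A * B) i j - (1 : Matrix (Fin n) (Fin n) ℤ) i j := by
  intro i j
  have key : A * B - 1 = (A - 1) * B + (B - 1) := by noncomm_ring
  have : (A * B) i j - (1 : Matrix (Fin n) (Fin n) ℤ) i j
      = ((A - 1) * B) i j + (B - 1) i j := by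
    have := congrFun (congrFun key i) j
    simpa [Matrix.sub_apply, Matrix.add_apply] using this
  rw [this]
  refine dvd_add ?_ ?_
  · rw [Matrix.mul_apply]
    exact Finset.dvd_sum fun k _ => by
      have := hA i k
      exact Dvd.dvd.mul_right (by simpa [Matrix.sub_apply] using this) _
  · simpa [Matrix.sub_apply] using hB i j

/-- sandwich congruence. -/
lemma cong_sandwich (c : ℤ) (L M R : Matrix (Fin n) (Fin n) ℤ)
    (hM : ∀ i j, c ∣ M i j - (1 : Matrix (Fin n) (Fin n) ℤ) i j) :
    ∀ i j, c ∣ (L * M * R) i j - (L * R) i j := by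
  intro i j
  have key : L * M * R - L * R = L * (M - 1) * R := by noncomm_ring
  have : (L * M * R) i j - (L * R) i j = (L * (M - 1) * R) i j := by
    have := congrFun (congrFun key i) j
    simpa [Matrix.sub_apply] using this
  rw [this, Matrix.mul_apply]
  refine Finset.dvd_sum fun k _ => ?_
  refine Dvd.dvd.mul_right ?_ _
  rw [Matrix.mul_apply]
  exact Finset.dvd_sum fun l _ => Dvd.dvd.mul_left (by simpa [Matrix.sub_apply] using hM l k) _

/-- gcd of coordinates is preserved by integrally invertible matrices. -/
lemma gcd_mulVec_eq_one (A B : Matrix (Fin n) (Fin n) ℤ) (hBA : B * A = 1)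
    (w : Fin n → ℤ) (hw : Finset.univ.gcd w = 1) :
    Finset.univ.gcd (A *ᵥ w) = 1 := by
  have hrec : B *ᵥ (A *ᵥ w) = w := by rw [Matrix.mulVec_mulVec, hBA, Matrix.one_mulVec]
  have hdvd : Finset.univ.gcd (A *ᵥ w) ∣ 1 := by
    rw [← hw]
    refine Finset.dvd_gcd fun i _ => ?_
    have : w i = ∑ k, B i k * (A *ᵥ w) k := by
      conv_lhs => rw [← hrec]
      rfl
    rw [this]
    exact Finset.dvd_sum fun k _ =>
      Dvd.dvd.mul_left (Finset.gcd_dvd (Finset.mem_univ k)) _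
  rcases Int.isUnit_iff.mp (isUnit_of_dvd_one hdvd) with h1 | h1
  · exact h1
  · exfalso
    have hnorm := Finset.normalize_gcd (s := (Finset.univ : Finset (Fin n))) (f := A *ᵥ w)
    rw [h1, Int.normalize_of_nonpos (by norm_num : (-1:ℤ) ≤ 0)] at hnorm
    norm_num at hnorm

end MatrixTools
/-- Core: a primitive vector `w ≡ e₀ (mod N)` with `w 0 ≠ 0` is the first column of a
matrix in `Γ(N)`. -/
lemma e1comp_core (m N : ℕ) (hN : 1 ≤ N) (w : Fin (m+2) → ℤ)
    (hw : Finset.univ.gcd w = 1)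
    (hcong : ∀ i : Fin (m+2), (N:ℤ) ∣ w i - (if i = 0 then 1 else 0))
    (hw0 : w 0 ≠ 0) :
    ∃ D : Matrix (Fin (m+2)) (Fin (m+2)) ℤ, D.det = 1 ∧
      (∀ i j, (N:ℤ) ∣ D i j - (1 : Matrix (Fin (m+2)) (Fin (m+2)) ℤ) i j) ∧
      D *ᵥ Pi.single (0 : Fin (m+2)) (1:ℤ) = w := by
  classical
  have h01 : (0 : Fin (m+2)) ≠ 1 := by simp [Fin.ext_iff]
  have h10 : (1 : Fin (m+2)) ≠ 0 := h01.symm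
  set z : Fin (m+2) → ℤ := fun i => (w i - (if i = 0 then 1 else 0)) / (N:ℤ) with hzdef
  have hz : ∀ i, (N:ℤ) * z i = w i - (if i = 0 then 1 else 0) :=
    fun i => Int.mul_ediv_cancel' (hcong i)
  have hz0 : (N:ℤ) * z 0 = w 0 - 1 := by simpa using hz 0
  have hz' : ∀ i : Fin (m+2), i ≠ 0 → (N:ℤ) * z i = w i := by
    intro i hi; simpa [hi] using hz i
  set S : Finset (Fin (m+2)) := (Finset.univ.erase 0).erase 1 with hSdef
  have hmemS : ∀ i : Fin (m+2), i ∈ S ↔ (i ≠ 1 ∧ i ≠ 0) := by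
    intro i; simp [hSdef, Finset.mem_erase]
  set g : ℤ := S.gcd w with hgdef
  obtain ⟨t, ht0, htsum⟩ := exists_gcd_combo S w
  have ht1 : t 1 = 0 := ht0 1 (by simp [hmemS])
  have ht00 : t 0 = 0 := ht0 0 (by simp [hmemS])
  have hnoprime : ∀ p : ℕ, p.Prime → (p:ℤ) ∣ w 1 → (p:ℤ) ∣ (N:ℤ)*g → (p:ℤ) ∣ w 0 → False := by
    intro p pp h1 hNg h0
    have hpZ : Prime (p:ℤ) := by rw [Int.prime_iff_natAbs_prime]; simpa using pp
    rcases hpZ.dvd_mul.mp hNg with hpN | hpg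
    · have h2 : (p:ℤ) ∣ (N:ℤ) * z 0 := Dvd.dvd.mul_right hpN _
      have h3 : (p:ℤ) ∣ w 0 - (N:ℤ) * z 0 := dvd_sub h0 h2
      have h4 : w 0 - (N:ℤ) * z 0 = 1 := by linear_combination -hz0
      rw [h4] at h3
      exact hpZ.not_dvd_one h3
    · have hall : ∀ i : Fin (m+2), (p:ℤ) ∣ w i := by
        intro i
        by_cases hi0 : i = 0
        · rwa [hi0]
        by_cases hi1 : i = 1
        · rwa [hi1]
        exact hpg.trans (Finset.gcd_dvd ((hmemS i).mpr ⟨hi1, hi0⟩))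
      have hd1 : (p:ℤ) ∣ 1 := hw ▸ Finset.dvd_gcd fun i _ => hall i
      exact hpZ.not_dvd_one hd1
  obtain ⟨k, hk⟩ := dagger (w 1) ((N:ℤ)*g) (w 0) hw0 hnoprime
  set W2 : ℤ := w 1 + (N:ℤ)*g*k with hW2
  have hgcd : Int.gcd (w 0) W2 = 1 := by rw [Int.gcd_comm]; exact hk
  set α := Int.gcdA (w 0) W2 with hα
  set β := Int.gcdB (w 0) W2 with hβ
  have hbez : w 0 * α + W2 * β = 1 := by
    have hb := Int.gcd_eq_gcd_ab (w 0) W2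
    rw [hgcd] at hb
    exact_mod_cast hb.symm
  set P : ℤ := (N:ℤ) * z 0 * β with hP
  set Q : ℤ := α + β * W2 with hQ
  have hdet2 : w 0 * Q - P * W2 = 1 := by
    rw [hP, hQ]; linear_combination hbez - β * W2 * hz0
  -- matrices
  set V : Matrix (Fin 2) (Fin (m+2)) ℤ :=
    Matrix.of (fun s j => if s = 0 then (if j = 0 then 1 else 0)
      else (if j = 1 then 1 else 0)) with hV
  set UB : Matrix (Fin (m+2)) (Fin 2) ℤ :=
    Matrix.of (fun i s => if s = 0 then (if i = 0 then w 0 - 1 else if i = 1 then W2 else 0)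
      else (if i = 0 then P else if i = 1 then Q - 1 else 0)) with hUB
  set UE : Matrix (Fin (m+2)) (Fin 2) ℤ :=
    Matrix.of (fun i s => if i = 0 ∨ i = 1 then 0
      else (N:ℤ) * z i * (if s = 0 then α else β)) with hUE
  set Uz : Matrix (Fin (m+2)) (Fin 2) ℤ :=
    Matrix.of (fun i s => if s = 0 then 0 else (if i = 1 then 1 else 0)) with hUz
  set Vz : Matrix (Fin 2) (Fin (m+2)) ℤ :=
    Matrix.of (fun s j => if s = 0 then 0 else (N:ℤ) * k * t j) with hVz
  have hVzUz : Vz * Uz = 0 := by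
    ext s j2
    fin_cases s <;> fin_cases j2 <;>
      simp [hVz, hUz, Matrix.mul_apply, mul_ite, mul_one, mul_zero,
        Finset.sum_ite_eq', ht1]
  have hVUE : V * UE = 0 := by
    ext s j2
    rw [Matrix.mul_apply, Matrix.zero_apply]
    refine Finset.sum_eq_zero fun x _ => ?_
    simp only [hV, hUE, Matrix.of_apply]
    by_cases hx : x = 0 ∨ x = 1
    · rw [if_pos hx, mul_zero]
    · push_neg at hx
      fin_cases s <;> simp [hx.1, hx.2]
  have hVmul : ∀ (U' : Matrix (Fin (m+2)) (Fin 2) ℤ) (s j2 : Fin 2),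
      (V * U') s j2 = U' (if s = 0 then 0 else 1) j2 := by
    intro U' s j2
    rw [Matrix.mul_apply]
    fin_cases s <;>
      simp [hV, ite_mul, one_mul, zero_mul, Finset.sum_ite_eq']
  refine ⟨(1 + (-Uz) * Vz) * ((1 + UE * V) * (1 + UB * V)), ?_, ?_, ?_⟩
  · -- determinant
    rw [Matrix.det_mul, Matrix.det_mul]
    have d1 : ((1 : Matrix (Fin (m+2)) (Fin (m+2)) ℤ) + (-Uz) * Vz).det = 1 :=
      (det_one_add_neg_mul Uz Vz hVzUz).1
    have d2 : ((1 : Matrix (Fin (m+2)) (Fin (m+2)) ℤ) + UE * V).det = 1 := by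
      rw [Matrix.det_one_add_mul_comm, hVUE, add_zero, Matrix.det_one]
    have d3 : ((1 : Matrix (Fin (m+2)) (Fin (m+2)) ℤ) + UB * V).det = 1 := by
      rw [Matrix.det_one_add_mul_comm]
      have hBB : (1 : Matrix (Fin 2) (Fin 2) ℤ) + V * UB = !![w 0, P; W2, Q] := by
        ext s j2
        rw [Matrix.add_apply, hVmul]
        fin_cases s <;> fin_cases j2 <;>
          simp [hUB, Matrix.one_apply, h01, h10] <;> ring
      rw [hBB, Matrix.det_fin_two_of]
      linear_combination hdet2
    rw [d1, d2, d3]; norm_num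
  · -- congruence
    refine cong_one_mul _ _ _ ?_ (cong_one_mul _ _ _ ?_ ?_)
    · intro i j
      have he : (((1 : Matrix (Fin (m+2)) (Fin (m+2)) ℤ) + (-Uz) * Vz) i j - (1 : Matrix (Fin (m+2)) (Fin (m+2)) ℤ) i j)
          = ((-Uz) * Vz) i j := by simp [Matrix.add_apply]
      rw [he, Matrix.mul_apply, Fin.sum_univ_two]
      have hv0 : (-Uz) i 0 = 0 := by simp [hUz]
      have hv1 : Vz 1 j = (N:ℤ) * k * t j := by
        simp [hVz, (by decide : (1:Fin 2) ≠ 0)]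
      rw [hv0, zero_mul, zero_add, hv1]
      rcases eq_or_ne i 1 with hi | hi
      · have hv : (-Uz) i 1 = -1 := by simp [hUz, hi, (by decide : (1:Fin 2) ≠ 0)]
        rw [hv]; exact ⟨-(k * t j), by ring⟩
      · have hv : (-Uz) i 1 = 0 := by simp [hUz, hi, (by decide : (1:Fin 2) ≠ 0)]
        rw [hv, zero_mul]; exact dvd_zero _
    · intro i j
      have he : (((1 : Matrix (Fin (m+2)) (Fin (m+2)) ℤ) + UE * V) i j - (1 : Matrix (Fin (m+2)) (Fin (m+2)) ℤ) i j)
          = (UE * V) i j := by simp [Matrix.add_apply]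
      rw [he, Matrix.mul_apply, Fin.sum_univ_two]
      simp only [hUE, Matrix.of_apply]
      by_cases hi : i = 0 ∨ i = 1
      · simp [hi]
      · simp only [if_neg hi]
        refine dvd_add ?_ ?_ <;>
          exact Dvd.dvd.mul_right (Dvd.dvd.mul_right (dvd_mul_right _ _) _) _
    · intro i j
      have he : (((1 : Matrix (Fin (m+2)) (Fin (m+2)) ℤ) + UB * V) i j - (1 : Matrix (Fin (m+2)) (Fin (m+2)) ℤ) i j)
          = (UB * V) i j := by simp [Matrix.add_apply]
      rw [he, Matrix.mul_apply, Fin.sum_univ_two]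
      have hf2 : (1:Fin 2) ≠ 0 := by decide
      have hUB0 : ∀ i', (N:ℤ) ∣ UB i' 0 := by
        intro i'
        rcases eq_or_ne i' 0 with h | h
        · have hv : UB i' 0 = w 0 - 1 := by simp [hUB, h]
          rw [hv]; exact ⟨z 0, by linear_combination -hz0⟩
        rcases eq_or_ne i' 1 with h2 | h2
        · have hv : UB i' 0 = W2 := by simp [hUB, h2, h10]
          rw [hv]; exact ⟨z 1 + g * k, by rw [hW2]; linear_combination -(hz' 1 h10)⟩
        · have hv : UB i' 0 = 0 := by simp [hUB, h, h2]
          rw [hv]; exact dvd_zero _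
      have hUB1 : ∀ i', (N:ℤ) ∣ UB i' 1 := by
        intro i'
        rcases eq_or_ne i' 0 with h | h
        · have hv : UB i' 1 = P := by simp [hUB, h, hf2]
          rw [hv]; exact ⟨z 0 * β, by rw [hP]; ring⟩
        rcases eq_or_ne i' 1 with h3 | h3
        · have hv : UB i' 1 = Q - 1 := by simp [hUB, h3, h10, hf2]
          rw [hv]; exact ⟨-(α * z 0), by rw [hQ]; linear_combination hbez + α * hz0⟩
        · have hv : UB i' 1 = 0 := by simp [hUB, h, h3, hf2]
          rw [hv]; exact dvd_zero _
      exact dvd_add ((hUB0 i).mul_right _) ((hUB1 i).mul_right _)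
  · -- first column
    rw [← Matrix.mulVec_mulVec, ← Matrix.mulVec_mulVec]
    set x1 : Fin (m+2) → ℤ := fun i => if i = 0 then w 0 else if i = 1 then W2 else 0 with hx1
    set x2 : Fin (m+2) → ℤ := fun i => if i = 0 then w 0 else if i = 1 then W2 else w i with hx2
    have hstep1 : (1 + UB * V) *ᵥ Pi.single (0 : Fin (m+2)) (1:ℤ) = x1 := by
      rw [mulVec_one_add]
      have hVe : V *ᵥ Pi.single (0 : Fin (m+2)) (1:ℤ) = fun s => if s = 0 then 1 else 0 := by
        rw [Matrix.mulVec_single]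
        funext s
        fin_cases s <;> simp [hV, h01]
      rw [hVe]
      funext i
      rw [Pi.add_apply]
      have hUBe : (UB *ᵥ fun s => if s = 0 then (1:ℤ) else 0) i = UB i 0 := by
        rw [Matrix.mulVec, dotProduct, Fin.sum_univ_two]
        simp
      rw [hUBe]
      rcases eq_or_ne i 0 with h | h
      · subst h
        have e1 : (Pi.single (0:Fin (m+2)) (1:ℤ) : Fin (m+2) → ℤ) 0 = 1 := by simp
        have e2 : UB 0 0 = w 0 - 1 := by simp [hUB]
        have e3 : x1 0 = w 0 := by simp [hx1]
        rw [e1, e2, e3]; ring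
      rcases eq_or_ne i 1 with h2 | h2
      · subst h2
        have e1 : (Pi.single (0:Fin (m+2)) (1:ℤ) : Fin (m+2) → ℤ) 1 = 0 := by
          simp [Pi.single_apply, h10]
        have e2 : UB 1 0 = W2 := by simp [hUB, h10]
        have e3 : x1 1 = W2 := by simp [hx1, h10]
        rw [e1, e2, e3]; ring
      · simp [Pi.single_apply, h, h2, hUB, hx1]
    have hstep2 : (1 + UE * V) *ᵥ x1 = x2 := by
      rw [mulVec_one_add]
      have hVx : V *ᵥ x1 = fun s => if s = 0 then w 0 else W2 := by
        have hterm0 : ∀ x : Fin (m+2), V 0 x * x1 x = (if x = 0 then w 0 else 0) := by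
          intro x
          rcases eq_or_ne x 0 with h | h <;> simp [hV, hx1, h]
        have hterm1 : ∀ x : Fin (m+2), V 1 x * x1 x = (if x = 1 then W2 else 0) := by
          intro x
          have hf2 : (1:Fin 2) ≠ 0 := by decide
          rcases eq_or_ne x 1 with h | h <;> simp [hV, hx1, h, h10, hf2]
        funext s
        fin_cases s
        · show ∑ x, V 0 x * x1 x = w 0
          refine (Finset.sum_congr rfl fun x _ => hterm0 x).trans ?_
          simp [Finset.sum_ite_eq']
        · show ∑ x, V 1 x * x1 x = W2
          refine (Finset.sum_congr rfl fun x _ => hterm1 x).trans ?_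
          simp [Finset.sum_ite_eq']
      rw [hVx]
      funext i
      rw [Pi.add_apply]
      have hUEe : (UE *ᵥ fun s => if s = 0 then w 0 else W2) i
          = UE i 0 * w 0 + UE i 1 * W2 := by
        rw [Matrix.mulVec, dotProduct, Fin.sum_univ_two]
        simp
      rw [hUEe]
      by_cases hi : i = 0 ∨ i = 1
      · rcases hi with h | h <;> simp [h, hUE, hx1, hx2, h01, h10]
      · push_neg at hi
        have hUE0 : UE i 0 = (N:ℤ) * z i * α := by simp [hUE, hi.1, hi.2]
        have hUE1 : UE i 1 = (N:ℤ) * z i * β := by simp [hUE, hi.1, hi.2]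
        have hx1i : x1 i = 0 := by simp [hx1, hi.1, hi.2]
        have hx2i : x2 i = w i := by simp [hx2, hi.1, hi.2]
        rw [hUE0, hUE1, hx1i, hx2i, zero_add]
        linear_combination ((N:ℤ) * z i) * hbez + hz' i hi.1
    have hstep3 : (1 + (-Uz) * Vz) *ᵥ x2 = w := by
      rw [mulVec_one_add]
      have hsum : ∑ j, t j * x2 j = g := by
        have h1 : ∑ j ∈ S, t j * x2 j = ∑ j, t j * x2 j :=
          Finset.sum_subset (Finset.subset_univ S)
            (fun j _ hj => by rw [ht0 j hj, zero_mul])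
        rw [hgdef, ← htsum, ← h1]
        refine Finset.sum_congr rfl fun j hj => ?_
        have hj' := (hmemS j).mp hj
        simp [hx2, hj'.1, hj'.2]
      have hVx : Vz *ᵥ x2 = fun s => if s = 0 then 0 else (N:ℤ) * k * g := by
        funext s
        rw [Matrix.mulVec, dotProduct]
        fin_cases s
        · simp [hVz]
        · simp only [hVz, Matrix.of_apply]
          have h2 : ((1:Fin 2) = 0) = False := by simp
          simp only [Fin.mk_one, h2, if_false]
          simp only [mul_assoc]
          rw [← Finset.mul_sum, ← Finset.mul_sum, hsum]
      rw [hVx]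
      funext i
      rw [Pi.add_apply]
      have hUze : ((-Uz) *ᵥ fun s => if s = 0 then (0:ℤ) else (N:ℤ) * k * g) i
          = -(if i = 1 then (N:ℤ) * k * g else 0) := by
        rw [Matrix.mulVec, dotProduct, Fin.sum_univ_two]
        simp [hUz, ite_mul, zero_mul, one_mul]
      rw [hUze]
      rcases eq_or_ne i 0 with h | h
      · simp [h, hx2, h01]
      rcases eq_or_ne i 1 with h2 | h2
      · subst h2
        have e1 : x2 1 = W2 := by simp [hx2, h10]
        rw [e1, if_pos rfl, hW2]; ring
      · simp [hx2, h, h2]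
    rw [hstep1, hstep2, hstep3]
/-- Full version: any primitive `w ≡ e₀ (mod N)` is the first column of a matrix in `Γ(N)`. -/
lemma e1comp (m N : ℕ) (hN : 1 ≤ N) (w : Fin (m+2) → ℤ)
    (hw : Finset.univ.gcd w = 1)
    (hcong : ∀ i : Fin (m+2), (N:ℤ) ∣ w i - (if i = 0 then 1 else 0)) :
    ∃ D : Matrix (Fin (m+2)) (Fin (m+2)) ℤ, D.det = 1 ∧
      (∀ i j, (N:ℤ) ∣ D i j - (1 : Matrix (Fin (m+2)) (Fin (m+2)) ℤ) i j) ∧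
      D *ᵥ Pi.single (0 : Fin (m+2)) (1:ℤ) = w := by
  classical
  by_cases hw0 : w 0 ≠ 0
  · exact e1comp_core m N hN w hw hcong hw0
  push_neg at hw0
  set a : Fin (m+2) → ℤ := fun j => if j = 0 then 0 else w j with ha
  set Us : Matrix (Fin (m+2)) (Fin 2) ℤ :=
    Matrix.of (fun i s => if s = 0 then (if i = 0 then (N:ℤ) else 0) else 0) with hUs
  set Vs : Matrix (Fin 2) (Fin (m+2)) ℤ :=
    Matrix.of (fun s j => if s = 0 then a j else 0) with hVs
  have hVsUs : Vs * Us = 0 := by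
    ext s j2
    rw [Matrix.mul_apply, Matrix.zero_apply]
    refine Finset.sum_eq_zero fun x _ => ?_
    rcases eq_or_ne x 0 with h | h <;> simp [hVs, hUs, ha, h]
  have hS1 : ((1 : Matrix (Fin (m+2)) (Fin (m+2)) ℤ) + (-Us) * Vs) * (1 + Us * Vs) = 1 :=
    one_add_neg_mul Us Vs hVsUs
  set Sq : ℤ := ∑ j, a j * w j with hSq
  have hVsw : Vs *ᵥ w = fun s => if s = 0 then Sq else 0 := by
    funext s
    rw [Matrix.mulVec, dotProduct]
    fin_cases s <;> simp [hVs, hSq]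
  have hw'fun : ∀ i, ((1 + Us * Vs) *ᵥ w) i = w i + (if i = 0 then (N:ℤ) * Sq else 0) := by
    intro i
    rw [mulVec_one_add, hVsw, Pi.add_apply]
    congr 1
    rw [Matrix.mulVec, dotProduct, Fin.sum_univ_two]
    rcases eq_or_ne i 0 with h | h <;>
      simp [hUs, h, (by decide : (1:Fin 2) ≠ 0)]
  have hex : ∃ j, w j ≠ 0 := by
    by_contra hc
    push_neg at hc
    have h0 : Finset.univ.gcd w = 0 := Finset.gcd_eq_zero_iff.mpr fun i _ => hc i
    rw [hw] at h0
    exact one_ne_zero h0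
  obtain ⟨j0, hj0⟩ := hex
  have hj0ne : j0 ≠ 0 := fun h => hj0 (by rwa [h])
  have hpos : 0 < Sq := by
    rw [hSq]
    refine Finset.sum_pos' (fun j _ => ?_) ⟨j0, Finset.mem_univ j0, ?_⟩
    · rcases eq_or_ne j 0 with h | h
      · simp [ha, h]
      · simp only [ha, if_neg h]
        exact mul_self_nonneg _
    · simp only [ha, if_neg hj0ne]
      exact mul_self_pos.mpr hj0
  have hN0 : (N:ℤ) ≠ 0 := by
    have : (0:ℤ) < (N:ℤ) := by exact_mod_cast hN
    exact this.ne'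
  have hw'0 : ((1 + Us * Vs) *ᵥ w) 0 ≠ 0 := by
    rw [hw'fun 0, hw0, if_pos rfl, zero_add]
    exact mul_ne_zero hN0 hpos.ne'
  have hw'gcd : Finset.univ.gcd ((1 + Us * Vs) *ᵥ w) = 1 :=
    gcd_mulVec_eq_one _ _ hS1 w hw
  have hw'cong : ∀ i : Fin (m+2),
      (N:ℤ) ∣ ((1 + Us * Vs) *ᵥ w) i - (if i = 0 then 1 else 0) := by
    intro i
    rw [hw'fun i]
    have h1 : w i + (if i = 0 then (N:ℤ) * Sq else 0) - (if i = 0 then 1 else 0)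
        = (w i - (if i = 0 then 1 else 0)) + (if i = 0 then (N:ℤ) * Sq else 0) := by ring
    rw [h1]
    refine dvd_add (hcong i) ?_
    rcases eq_or_ne i 0 with h | h <;> simp [h]
  obtain ⟨D', h1, h2, h3⟩ := e1comp_core m N hN _ hw'gcd hw'cong hw'0
  refine ⟨(1 + (-Us) * Vs) * D', ?_, ?_, ?_⟩
  · rw [Matrix.det_mul, h1, mul_one]
    exact (det_one_add_neg_mul Us Vs hVsUs).1
  · refine cong_one_mul _ _ _ ?_ h2
    intro i j
    have he : (((1 : Matrix (Fin (m+2)) (Fin (m+2)) ℤ) + (-Us) * Vs) i j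
        - (1 : Matrix (Fin (m+2)) (Fin (m+2)) ℤ) i j) = ((-Us) * Vs) i j := by
      simp [Matrix.add_apply]
    rw [he, Matrix.mul_apply, Fin.sum_univ_two]
    have hv1 : Vs 1 j = 0 := by simp [hVs, (by decide : (1:Fin 2) ≠ 0)]
    rw [hv1, mul_zero, add_zero]
    rcases eq_or_ne i 0 with h | h
    · have hv : (-Us) i 0 = -(N:ℤ) := by simp [hUs, h]
      rw [hv]
      exact ⟨-(Vs 0 j), by ring⟩
    · have hv : (-Us) i 0 = 0 := by simp [hUs, h]
      rw [hv, zero_mul]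
      exact dvd_zero _
  · rw [← Matrix.mulVec_mulVec, h3, Matrix.mulVec_mulVec, hS1, Matrix.one_mulVec]
/-- Let `n ≥ 2`, `N ≥ 1`, and let `u, v ∈ ℤⁿ` be primitive vectors (gcd of
coordinates equal to `1`) with `u ≡ v (mod N)` coordinatewise.  Then there is
`g ∈ SL_n(ℤ)` congruent to the identity matrix modulo `N` entrywise with `g · u = v`. -/
theorem stmt_2 (n N : ℕ) (hn : 2 ≤ n) (hN : 1 ≤ N) (u v : Fin n → ℤ)
    (hu : Finset.univ.gcd u = 1) (hv : Finset.univ.gcd v = 1)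
    (huv : ∀ i, (N : ℤ) ∣ (u i - v i)) :
    ∃ g : Matrix.SpecialLinearGroup (Fin n) ℤ,
      (∀ i j, (N : ℤ) ∣ ((g : Matrix (Fin n) (Fin n) ℤ) i j -
        (1 : Matrix (Fin n) (Fin n) ℤ) i j)) ∧
      (g : Matrix (Fin n) (Fin n) ℤ).mulVec u = v := by
  classical
  obtain ⟨m, rfl⟩ : ∃ m, n = m + 2 := ⟨n - 2, by omega⟩
  have hcongu : ∀ i : Fin (m+2), ((1:ℕ):ℤ) ∣ u i - (if i = 0 then 1 else 0) :=
    fun i => one_dvd _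
  obtain ⟨A, hAdet, -, hAcol⟩ := e1comp m 1 le_rfl u hu hcongu
  set adjA := A.adjugate with hadj
  have hA1 : A * adjA = 1 := by rw [hadj, Matrix.mul_adjugate, hAdet, one_smul]
  have hA2 : adjA * A = 1 := by rw [hadj, Matrix.adjugate_mul, hAdet, one_smul]
  have hsingle : adjA *ᵥ u = Pi.single (0 : Fin (m+2)) (1:ℤ) := by
    rw [← hAcol, Matrix.mulVec_mulVec, hA2, Matrix.one_mulVec]
  have hwgcd : Finset.univ.gcd (adjA *ᵥ v) = 1 := gcd_mulVec_eq_one adjA A hA1 v hv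
  have hwcong : ∀ i : Fin (m+2), (N:ℤ) ∣ (adjA *ᵥ v) i - (if i = 0 then 1 else 0) := by
    intro i
    have h2 : (if i = (0:Fin (m+2)) then (1:ℤ) else 0)
        = (Pi.single (0:Fin (m+2)) (1:ℤ) : Fin (m+2) → ℤ) i := by
      simp [Pi.single_apply]
    rw [h2, ← hsingle]
    have h3 : (adjA *ᵥ v) i - (adjA *ᵥ u) i = (adjA *ᵥ (v - u)) i := by
      rw [Matrix.mulVec_sub, Pi.sub_apply]
    rw [h3, Matrix.mulVec, dotProduct]
    refine Finset.dvd_sum fun k _ => Dvd.dvd.mul_left ?_ _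
    have h4 : (v - u) k = -(u k - v k) := by simp
    rw [h4]
    exact dvd_neg.mpr (huv k)
  obtain ⟨D, hDdet, hDcong, hDcol⟩ := e1comp m N hN (adjA *ᵥ v) hwgcd hwcong
  have hdetadj : adjA.det = 1 := by
    have hh := congrArg Matrix.det hA1
    rw [Matrix.det_mul, hAdet, one_mul, Matrix.det_one] at hh
    exact hh
  have hGdet : (A * D * adjA).det = 1 := by
    rw [Matrix.det_mul, Matrix.det_mul, hAdet, hDdet, hdetadj]
    norm_num
  refine ⟨⟨A * D * adjA, hGdet⟩, ?_, ?_⟩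
  · intro i j
    have hc := cong_sandwich (N:ℤ) A D adjA hDcong i j
    rw [hA1] at hc
    exact hc
  · show (A * D * adjA) *ᵥ u = v
    rw [← Matrix.mulVec_mulVec, ← Matrix.mulVec_mulVec, hsingle, hDcol,
      Matrix.mulVec_mulVec, hA1, Matrix.one_mulVec]
end

section
/- Let N be a positive integer. For every primitive vector v ∈ ℤ³ there exist a positive divisor d of N, a matrix γ ∈ Γ₀(N,3), and a sign s ∈ {1,−1} such that γ·v = s·(1,d,0)ᵀ. Moreover d is uniquely determined by v: if d and d′ are positive divisors of N and some elements of Γ₀(N,3) carry v to ±(1,d,0)ᵀ and to ±(1,d′,0)ᵀ respectively, then d = d′. (Equivalently, the Γ₀(N,3)-orbits of lines in ℚ³ are in one-to-one correspondence with the positive divisors of N, the line for d being spanned by (1,d,0)ᵀ.) -/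
/-- Membership in `Γ₀(N,3)`: an element of `SL₃(ℤ)` whose `(2,1)` and `(3,1)` entries
(`1`-indexed), i.e. the entries `(1,0)` and `(2,0)` in `0`-indexed notation, are divisible
by `N`. -/
def InGamma0 (N : ℕ) (γ : Matrix.SpecialLinearGroup (Fin 3) ℤ) : Prop :=
  (N : ℤ) ∣ (γ : Matrix (Fin 3) (Fin 3) ℤ) 1 0 ∧
  (N : ℤ) ∣ (γ : Matrix (Fin 3) (Fin 3) ℤ) 2 0

/-- `γ` carries the vector `v` to `± w`. -/
def CarriesTo (γ : Matrix.SpecialLinearGroup (Fin 3) ℤ) (v w : Fin 3 → ℤ) : Prop :=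
  ∃ s : ℤ, (s = 1 ∨ s = -1) ∧ (γ : Matrix (Fin 3) (Fin 3) ℤ).mulVec v = s • w

abbrev SL3 := Matrix.SpecialLinearGroup (Fin 3) ℤ

lemma inGamma0_mul {N : ℕ} {γ δ : SL3} (h1 : InGamma0 N γ) (h2 : InGamma0 N δ) :
    InGamma0 N (γ * δ) := by
  constructor <;>
  · rw [show ((↑(γ * δ) : Matrix (Fin 3) (Fin 3) ℤ)) = ↑γ * ↑δ from rfl, Matrix.mul_apply,
      Fin.sum_univ_three]
    first
    | exact dvd_add (dvd_add (h1.1.mul_right _) (h2.1.mul_left _)) (h2.2.mul_left _)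
    | exact dvd_add (dvd_add (h1.2.mul_right _) (h2.1.mul_left _)) (h2.2.mul_left _)

lemma inGamma0_inv {N : ℕ} {γ : SL3} (h : InGamma0 N γ) : InGamma0 N γ⁻¹ := by
  constructor <;>
    rw [Matrix.SpecialLinearGroup.coe_inv, Matrix.adjugate_fin_three] <;> simp only
      [Matrix.cons_val', Matrix.cons_val_zero, Matrix.cons_val_one, Matrix.head_cons,
       Matrix.empty_val', Matrix.cons_val_fin_one, Matrix.head_fin_const, Matrix.of_apply,
       Matrix.cons_val_two, Matrix.tail_cons]
  · exact dvd_add (((h.1.mul_right _).neg_right)) (h.2.mul_left _)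
  · exact dvd_sub (h.1.mul_right _) (h.2.mul_left _)

def GRel (N : ℕ) (v w : Fin 3 → ℤ) : Prop :=
  ∃ γ : SL3, InGamma0 N γ ∧ (γ : Matrix (Fin 3) (Fin 3) ℤ).mulVec v = w

lemma GRel.trans {N : ℕ} {v w u : Fin 3 → ℤ} (h1 : GRel N v w) (h2 : GRel N w u) : GRel N v u := by
  obtain ⟨γ, hγ, e⟩ := h1; obtain ⟨δ, hδ, e'⟩ := h2
  exact ⟨δ * γ, inGamma0_mul hδ hγ,
    by rw [show ((↑(δ * γ) : Matrix (Fin 3) (Fin 3) ℤ)) = ↑δ * ↑γ from rfl,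
      ← Matrix.mulVec_mulVec, e, e']⟩

section Steps
variable (N : ℕ)

lemma step_euclid (a b c : ℤ) : GRel N ![a, b, c] ![a, (Int.gcd b c : ℤ), 0] := by
  by_cases hbc : b = 0 ∧ c = 0
  · obtain ⟨rfl, rfl⟩ := hbc
    refine ⟨1, ⟨by simp, by simp⟩, ?_⟩
    rw [show ((↑(1 : SL3) : Matrix (Fin 3) (Fin 3) ℤ)) = 1 from rfl, Matrix.one_mulVec]
    funext i; fin_cases i <;> simp [Int.gcd]
  · have hg : (Int.gcd b c : ℤ) ≠ 0 := by
      simpa [Int.gcd_eq_zero_iff] using fun h1 h2 => hbc ⟨h1, h2⟩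
    obtain ⟨b', hb'⟩ : ((Int.gcd b c : ℤ)) ∣ b := (Int.gcd_dvd_left _ _)
    obtain ⟨c', hc'⟩ : ((Int.gcd b c : ℤ)) ∣ c := (Int.gcd_dvd_right _ _)
    have hbez : b * Int.gcdA b c + c * Int.gcdB b c = (Int.gcd b c : ℤ) :=
      (Int.gcd_eq_gcd_ab b c).symm
    have key : Int.gcdA b c * b' + Int.gcdB b c * c' = 1 := by
      apply mul_left_cancel₀ hg
      linear_combination hbez - Int.gcdA b c * hb' - Int.gcdB b c * hc'
    refine ⟨⟨!![1,0,0; 0,Int.gcdA b c,Int.gcdB b c; 0,-c',b'], ?_⟩, ⟨?_, ?_⟩, ?_⟩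
    · simp [Matrix.det_fin_three]; linear_combination key
    · simp [Matrix.SpecialLinearGroup.coe_mk, Matrix.vecHead, Matrix.vecTail]
    · simp [Matrix.SpecialLinearGroup.coe_mk, Matrix.vecHead, Matrix.vecTail]
    · funext i
      fin_cases i <;>
        simp [Matrix.SpecialLinearGroup.coe_mk, Matrix.mulVec, dotProduct,
          Fin.sum_univ_three]
      · linear_combination hbez
      · linear_combination b' * hc' - c' * hb'

lemma step_shear (a g : ℤ) : GRel N ![a, g, 0] ![a, N*a + g, g] := by
  refine ⟨⟨!![1,0,0; (N:ℤ),1,0; 0,1,1], ?_⟩, ⟨?_, ?_⟩, ?_⟩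
  · simp [Matrix.det_fin_three]
  · simp [Matrix.SpecialLinearGroup.coe_mk, Matrix.vecHead, Matrix.vecTail]
  · simp [Matrix.SpecialLinearGroup.coe_mk, Matrix.vecHead, Matrix.vecTail]
  · funext i
    fin_cases i <;>
      simp [Matrix.SpecialLinearGroup.coe_mk, Matrix.mulVec, dotProduct,
        Fin.sum_univ_three]

lemma step_translate (a dd t : ℤ) : GRel N ![a, dd, 0] ![a + t*dd, dd, 0] := by
  refine ⟨⟨!![1,t,0; 0,1,0; 0,0,1], ?_⟩, ⟨?_, ?_⟩, ?_⟩
  · simp [Matrix.det_fin_three]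
  · simp [Matrix.SpecialLinearGroup.coe_mk, Matrix.vecHead, Matrix.vecTail]
  · simp [Matrix.SpecialLinearGroup.coe_mk, Matrix.vecHead, Matrix.vecTail]
  · funext i
    fin_cases i <;>
      simp [Matrix.SpecialLinearGroup.coe_mk, Matrix.mulVec, dotProduct,
        Fin.sum_univ_three]

lemma step_final (a x y n d : ℤ) (h1 : a*x + N*y = 1) (hNd : (N:ℤ) = d * n) :
    GRel N ![a, d, 0] ![1, d, 0] := by
  refine ⟨⟨!![x, y*n, y; 0,1,0; -(N:ℤ), a*n, a], ?_⟩, ⟨?_, ?_⟩, ?_⟩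
  · simp [Matrix.det_fin_three]; linear_combination h1
  · simp [Matrix.SpecialLinearGroup.coe_mk, Matrix.vecHead, Matrix.vecTail]
  · simp [Matrix.SpecialLinearGroup.coe_mk, Matrix.vecHead, Matrix.vecTail]
  · funext i
    fin_cases i <;>
      simp [Matrix.SpecialLinearGroup.coe_mk, Matrix.mulVec, dotProduct,
        Fin.sum_univ_three]
    · linear_combination h1 - y * hNd
    · linear_combination -a * hNd

end Steps

lemma int_gcd_add_mul (x y k : ℤ) : Int.gcd (x + k*y) y = Int.gcd x y := by
  apply Nat.dvd_antisymm
  · apply Int.natCast_dvd_natCast.mp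
    refine Int.dvd_coe_gcd ?_ (Int.gcd_dvd_right _ _)
    have h1 : ((Int.gcd (x + k*y) y : ℤ)) ∣ (x + k*y) := (Int.gcd_dvd_left _ _)
    have h2 : ((Int.gcd (x + k*y) y : ℤ)) ∣ y := (Int.gcd_dvd_right _ _)
    simpa using dvd_sub h1 (h2.mul_left k)
  · apply Int.natCast_dvd_natCast.mp
    refine Int.dvd_coe_gcd ?_ (Int.gcd_dvd_right _ _)
    exact dvd_add (Int.gcd_dvd_left _ _) ((Int.gcd_dvd_right _ _).mul_left k)

lemma exists_coprime_nat (m : ℕ) (hm : m ≠ 0) (n x : ℕ) (hx : Nat.Coprime x n) :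
    ∃ k : ℕ, Nat.Coprime (x + k * n) m := by
  let ps := m.primeFactors.filter (fun p ↦ ¬p ∣ x)
  use ps.prod id
  apply Nat.coprime_of_dvd
  intro p pp hp hpn
  by_cases hpx : p ∣ x
  · have h := Nat.dvd_sub hp hpx
    rw [add_comm, Nat.add_sub_cancel] at h
    rcases pp.dvd_mul.mp h with h | h
    · have ⟨q, hq, hq'⟩ := (pp.prime.dvd_finset_prod_iff id).mp h
      rw [Finset.mem_filter, Nat.mem_primeFactors,
        ← (Nat.prime_dvd_prime_iff_eq pp hq.1.1).mp hq'] at hq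
      exact hq.2 hpx
    · exact Nat.Prime.not_coprime_iff_dvd.mpr ⟨p, pp, hpx, h⟩ hx
  · have pps : p ∈ ps := Finset.mem_filter.mpr ⟨Nat.mem_primeFactors.mpr ⟨pp, hpn, hm⟩, hpx⟩
    have h := Nat.dvd_sub hp ((Finset.dvd_prod_of_mem id pps).mul_right n)
    rw [Nat.add_sub_cancel] at h
    contradiction

lemma exists_coprime_int (N : ℕ) (hN : 0 < N) (d n : ℕ) (hdn : N = d * n) (a : ℤ)
    (ha : Int.gcd a d = 1) : ∃ t : ℤ, Int.gcd (a + t*d) N = 1 := by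
  have hN0 : (N : ℤ) ≠ 0 := by exact_mod_cast hN.ne'
  set a₀ : ℕ := (a % N).toNat with ha₀
  have hnn : (0:ℤ) ≤ a % N := Int.emod_nonneg a hN0
  have hcast : (a₀ : ℤ) = a % N := Int.toNat_of_nonneg hnn
  have hq : (a₀ : ℤ) = a + (-(a / N)) * N := by
    rw [hcast, Int.emod_def]; ring
  have hgcd0 : Nat.Coprime a₀ d := by
    have : Int.gcd ((a₀ : ℤ)) d = Int.gcd a d := by
      rw [hq, show a + (-(a / N)) * (N:ℤ) = a + ((-(a / N)) * n) * d by
        rw [hdn]; push_cast; ring]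
      exact int_gcd_add_mul a (d) _
    simpa [Int.gcd_natCast_natCast] using this.trans ha
  obtain ⟨k, hk⟩ := exists_coprime_nat N hN.ne' d a₀ hgcd0
  refine ⟨(-(a / N)) * n + k, ?_⟩
  have : a + ((-(a / N)) * n + k) * d = ((a₀ + k * d : ℕ) : ℤ) := by
    push_cast
    rw [hq, hdn]; push_cast; ring
  rw [this]
  exact (Int.gcd_natCast_natCast _ _).trans hk

lemma nat_dvd_int {e : ℕ} {z : ℤ} (h : e ∣ z.natAbs) : (e:ℤ) ∣ z := by
  rwa [← Int.natAbs_dvd_natAbs, Int.natAbs_natCast]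

lemma prim_coprime {v : Fin 3 → ℤ} (h : Finset.univ.gcd v = 1) :
    Nat.Coprime (v 0).natAbs (Int.gcd (v 1) (v 2)) := by
  set e : ℕ := Nat.gcd (v 0).natAbs (Int.gcd (v 1) (v 2)) with he
  have hdvd : (e:ℤ) ∣ Finset.univ.gcd v := by
    apply Finset.dvd_gcd
    intro i _
    fin_cases i
    · exact nat_dvd_int (Nat.gcd_dvd_left _ _)
    · exact dvd_trans (Int.natCast_dvd_natCast.mpr (Nat.gcd_dvd_right _ _)) (Int.gcd_dvd_left _ _)
    · exact dvd_trans (Int.natCast_dvd_natCast.mpr (Nat.gcd_dvd_right _ _)) (Int.gcd_dvd_right _ _)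
  rw [h] at hdvd
  exact Nat.dvd_one.mp (Int.natCast_dvd_natCast.mp (by exact_mod_cast hdvd))

lemma int_gcd_cast_right (a : ℤ) (m : ℕ) : Int.gcd a (m : ℤ) = Nat.gcd a.natAbs m := by
  unfold Int.gcd
  rw [Int.natAbs_natCast]

lemma exists_rep {N : ℕ} (hN : 0 < N) {v : Fin 3 → ℤ} (h : Finset.univ.gcd v = 1) :
    GRel N v ![1, (Nat.gcd N (Int.gcd (v 1) (v 2)) : ℤ), 0] := by
  set a : ℤ := v 0 with ha
  set g1 : ℕ := Int.gcd (v 1) (v 2) with hg1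
  set d : ℕ := Nat.gcd N g1 with hd
  have coprime0 : Nat.Coprime a.natAbs g1 := prim_coprime h
  have hv : v = ![v 0, v 1, v 2] := by funext i; fin_cases i <;> rfl
  have r1 : GRel N v ![a, (g1 : ℤ), 0] := by rw [hv]; exact step_euclid N a (v 1) (v 2)
  have r2 : GRel N ![a, (g1:ℤ), 0] ![a, (N:ℤ)*a + g1, (g1:ℤ)] := step_shear N a g1
  have hgcd : Int.gcd ((N:ℤ)*a + g1) (g1:ℤ) = d := by
    have h1 : Int.gcd ((N:ℤ)*a + 1*(g1:ℤ)) (g1:ℤ) = Int.gcd ((N:ℤ)*a) (g1:ℤ) :=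
      int_gcd_add_mul _ _ 1
    rw [one_mul] at h1
    rw [h1, int_gcd_cast_right, Int.natAbs_mul, Int.natAbs_natCast]
    exact coprime0.gcd_mul_right_cancel N
  have r3 : GRel N ![a, (N:ℤ)*a + g1, (g1:ℤ)] ![a, (d:ℤ), 0] := by
    have := step_euclid N a ((N:ℤ)*a + g1) (g1:ℤ)
    rwa [hgcd] at this
  -- coprimality of a with d
  have had : Int.gcd a (d:ℤ) = 1 := by
    rw [int_gcd_cast_right]
    exact coprime0.coprime_dvd_right (Nat.gcd_dvd_right N g1)
  have hd_dvd : d ∣ N := Nat.gcd_dvd_left _ _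
  set n : ℕ := N / d with hn
  have hdn : N = d * n := (Nat.mul_div_cancel' hd_dvd).symm
  obtain ⟨t, ht⟩ := exists_coprime_int N hN d n hdn a had
  have r4 : GRel N ![a, (d:ℤ), 0] ![a + t*(d:ℤ), (d:ℤ), 0] := step_translate N a d t
  -- Bezout for a + t*d and N
  have hbez : ((Int.gcd (a + t*(d:ℤ)) (N:ℤ) : ℕ) : ℤ)
      = (a + t*(d:ℤ)) * Int.gcdA (a + t*(d:ℤ)) (N:ℤ) + (N:ℤ) * Int.gcdB (a + t*(d:ℤ)) (N:ℤ) :=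
    Int.gcd_eq_gcd_ab _ _
  have h1 : (a + t*(d:ℤ)) * Int.gcdA (a + t*(d:ℤ)) (N:ℤ) + (N:ℤ) * Int.gcdB (a + t*(d:ℤ)) (N:ℤ)
      = 1 := by
    rw [← hbez, ht, Nat.cast_one]
  have hNd : (N:ℤ) = (d:ℤ) * (n:ℤ) := by exact_mod_cast congrArg (Nat.cast : ℕ → ℤ) hdn
  have r5 : GRel N ![a + t*(d:ℤ), (d:ℤ), 0] ![1, (d:ℤ), 0] :=
    step_final N (a + t*(d:ℤ)) _ _ (n:ℤ) (d:ℤ) h1 hNd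
  exact (((r1.trans r2).trans r3).trans r4).trans r5

lemma unique_aux {N : ℕ} {v : Fin 3 → ℤ} {d : ℕ} (hd : d ∣ N)
    (h : ∃ γ, InGamma0 N γ ∧ CarriesTo γ v ![1, (d:ℤ), 0]) :
    d = Nat.gcd N (Int.gcd (v 1) (v 2)) := by
  obtain ⟨γ, hγ, s, hs, hmv⟩ := h
  set e : ℕ := Nat.gcd N (Int.gcd (v 1) (v 2)) with he
  have he_v1 : (e:ℤ) ∣ v 1 :=
    dvd_trans (Int.natCast_dvd_natCast.mpr (Nat.gcd_dvd_right _ _)) (Int.gcd_dvd_left _ _)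
  have he_v2 : (e:ℤ) ∣ v 2 :=
    dvd_trans (Int.natCast_dvd_natCast.mpr (Nat.gcd_dvd_right _ _)) (Int.gcd_dvd_right _ _)
  have he_N : (e:ℤ) ∣ (N:ℤ) := Int.natCast_dvd_natCast.mpr (Nat.gcd_dvd_left _ _)
  -- e divides d
  have hA : e ∣ d := by
    have h1 := congrFun hmv 1
    have h2 : ((γ : Matrix (Fin 3) (Fin 3) ℤ).mulVec v) 1
        = (γ : Matrix (Fin 3) (Fin 3) ℤ) 1 0 * v 0 + (γ : Matrix (Fin 3) (Fin 3) ℤ) 1 1 * v 1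
          + (γ : Matrix (Fin 3) (Fin 3) ℤ) 1 2 * v 2 := by
      simp [Matrix.mulVec, dotProduct, Fin.sum_univ_three]
    have h3 : (s • ![1, (d:ℤ), 0]) 1 = s * d := by simp
    have hdvd : (e:ℤ) ∣ s * d := by
      rw [← h3, ← h1, h2]
      exact dvd_add (dvd_add ((dvd_trans he_N hγ.1).mul_right _) (he_v1.mul_left _))
        (he_v2.mul_left _)
    have : (e:ℤ) ∣ (d:ℤ) := by
      rcases hs with rfl | rfl
      · simpa using hdvd
      · simpa using hdvd.neg_left
    exact_mod_cast this
  -- d divides e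
  have hB : d ∣ e := by
    have hδ := inGamma0_inv hγ
    have hv : v = (↑(γ⁻¹) : Matrix (Fin 3) (Fin 3) ℤ).mulVec (s • ![1, (d:ℤ), 0]) := by
      rw [← hmv, Matrix.mulVec_mulVec,
        show (↑(γ⁻¹) : Matrix (Fin 3) (Fin 3) ℤ) * ↑γ = ↑(γ⁻¹ * γ) from rfl, inv_mul_cancel,
        show (↑(1 : SL3) : Matrix (Fin 3) (Fin 3) ℤ) = 1 from rfl, Matrix.one_mulVec]
    have key : ∀ i : Fin 3, i = 1 ∨ i = 2 → (d:ℤ) ∣ v i := by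
      intro i hi
      have h2 : v i = s * ((↑(γ⁻¹) : Matrix (Fin 3) (Fin 3) ℤ) i 0 * 1
          + (↑(γ⁻¹) : Matrix (Fin 3) (Fin 3) ℤ) i 1 * d
          + (↑(γ⁻¹) : Matrix (Fin 3) (Fin 3) ℤ) i 2 * 0) := by
        conv_lhs => rw [hv]
        simp [Matrix.mulVec, dotProduct, Fin.sum_univ_three]
        ring
      have hdN : (d:ℤ) ∣ (N:ℤ) := Int.natCast_dvd_natCast.mpr hd
      have : (d:ℤ) ∣ ((↑(γ⁻¹) : Matrix (Fin 3) (Fin 3) ℤ) i 0 * 1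
          + (↑(γ⁻¹) : Matrix (Fin 3) (Fin 3) ℤ) i 1 * d
          + (↑(γ⁻¹) : Matrix (Fin 3) (Fin 3) ℤ) i 2 * 0) := by
        rcases hi with rfl | rfl
        · exact dvd_add (dvd_add ((dvd_trans hdN hδ.1).mul_right _) (dvd_mul_left _ _))
            (by simp)
        · exact dvd_add (dvd_add ((dvd_trans hdN hδ.2).mul_right _) (dvd_mul_left _ _))
            (by simp)
      rw [h2]
      exact this.mul_left s
    refine Nat.dvd_gcd hd ?_
    exact Int.natCast_dvd_natCast.mp
      (by exact_mod_cast Int.dvd_coe_gcd (key 1 (Or.inl rfl)) (key 2 (Or.inr rfl)))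
  exact Nat.dvd_antisymm hB hA

/-- **Statement 3.** For every primitive `v ∈ ℤ³` there are a positive divisor `d` of `N`,
a matrix `γ ∈ Γ₀(N,3)` and a sign `s` with `γ · v = s • (1,d,0)ᵀ`; moreover `d` is uniquely
determined by `v`. -/
theorem stmt_3 (N : ℕ) (hN : 0 < N) :
    (∀ v : Fin 3 → ℤ, Finset.univ.gcd v = 1 →
      ∃ d : ℕ, 0 < d ∧ d ∣ N ∧ ∃ γ, InGamma0 N γ ∧ CarriesTo γ v ![1, (d : ℤ), 0]) ∧
    (∀ v : Fin 3 → ℤ, Finset.univ.gcd v = 1 →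
      ∀ d d' : ℕ, 0 < d → d ∣ N → 0 < d' → d' ∣ N →
      (∃ γ, InGamma0 N γ ∧ CarriesTo γ v ![1, (d : ℤ), 0]) →
      (∃ γ, InGamma0 N γ ∧ CarriesTo γ v ![1, (d' : ℤ), 0]) → d = d') := by
  constructor
  · intro v hv
    refine ⟨Nat.gcd N (Int.gcd (v 1) (v 2)), Nat.gcd_pos_of_pos_left _ hN,
      Nat.gcd_dvd_left _ _, ?_⟩
    obtain ⟨γ, hγ, e⟩ := exists_rep hN hv
    exact ⟨γ, hγ, 1, Or.inl rfl, by rw [e, one_smul]⟩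
  · intro v hv d d' _ hdN _ hd'N h1 h2
    rw [unique_aux hdN h1, unique_aux hd'N h2]
end

section
/- Let E = ℚ(√D) be a real quadratic field (D > 1 squarefree), let β ∈ E \ ℚ, and let b = (β,1,0)ᵀ ∈ E³. For M ∈ SL₃(ℤ) the following are equivalent: (i) there exists λ ∈ E with M·b = λ·b; (ii) M₃₁ = M₃₂ = 0 and there exists λ ∈ E with M₁₁β + M₁₂ = λβ and M₂₁β + M₂₂ = λ. Moreover, if these hold, then λ is a unit of the ring of integers 𝓞_E, the upper-left 2×2 block h = [[M₁₁,M₁₂],[M₂₁,M₂₂]] has det h = ±1, and M₃₃ = ±1. -/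
open Polynomial

lemma aux_key {E : Type*} [Field E] [Algebra ℚ E]
    (β : E) (hβ : β ∉ Set.range (algebraMap ℚ E)) (a b : ℤ)
    (h : (a : E) * β + (b : E) = 0) : a = 0 ∧ b = 0 := by
  haveI : CharZero E := charZero_of_injective_algebraMap (algebraMap ℚ E).injective
  by_cases ha : a = 0
  · subst ha
    simp at h
    exact ⟨rfl, by exact_mod_cast h⟩
  · exfalso
    apply hβ
    refine ⟨(-b : ℚ) / (a : ℚ), ?_⟩
    have ha' : (a : E) ≠ 0 := Int.cast_ne_zero.mpr ha
    have h1 : (algebraMap ℚ E) ((-b : ℚ) / a) = (-(b : E)) / (a : E) := by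
      rw [map_div₀, map_neg, map_intCast, map_intCast]
    rw [h1, div_eq_iff ha']
    linear_combination -h

lemma aux_int_s10 {E : Type*} [Field E] (x : E) (t d : ℤ)
    (h : x ^ 2 - (t : E) * x + (d : E) = 0) : IsIntegral ℤ x := by
  refine ⟨X ^ 2 - C t * X + C d, ?_, ?_⟩
  · monicity!
  · have : (Polynomial.aeval x) (X ^ 2 - C t * X + C d) = 0 := by
      simp only [map_add, map_sub, map_mul, map_pow, aeval_X, aeval_C]
      simp only [algebraMap_int_eq, eq_intCast]
      linear_combination h
    simpa [Polynomial.aeval_def] using this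

/-- Let `E` be a real quadratic field (a `ℚ`-algebra which is a field of
degree `2` over `ℚ`, equipped with an embedding into `ℝ`), let `β ∈ E \ ℚ` and let
`b = (β,1,0)ᵀ ∈ E³`.  For `M ∈ SL₃(ℤ)` the following are equivalent:
(i) `M·b = λ•b` for some `λ ∈ E`;
(ii) `M₃₁ = M₃₂ = 0` and there is `λ ∈ E` with `M₁₁β + M₁₂ = λβ` and `M₂₁β + M₂₂ = λ`.
Moreover, if these hold then `λ` is a unit of the ring of integers of `E`, the upper-left
`2×2` block of `M` has determinant `±1`, and `M₃₃ = ±1`. -/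
theorem stmt_11 (E : Type*) [Field E] [Algebra ℚ E]
    (hquad : Module.finrank ℚ E = 2) (φ : E →+* ℝ)
    (β : E) (hβ : β ∉ Set.range (algebraMap ℚ E))
    (M : Matrix.SpecialLinearGroup (Fin 3) ℤ) :
    ((∃ lam : E, ((M : Matrix (Fin 3) (Fin 3) ℤ).map ((↑) : ℤ → E)).mulVec ![β, 1, 0] =
        lam • ![β, 1, 0]) ↔
      ((M : Matrix (Fin 3) (Fin 3) ℤ) 2 0 = 0 ∧ (M : Matrix (Fin 3) (Fin 3) ℤ) 2 1 = 0 ∧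
        ∃ lam : E,
          ((M : Matrix (Fin 3) (Fin 3) ℤ) 0 0 : E) * β +
            ((M : Matrix (Fin 3) (Fin 3) ℤ) 0 1 : E) = lam * β ∧
          ((M : Matrix (Fin 3) (Fin 3) ℤ) 1 0 : E) * β +
            ((M : Matrix (Fin 3) (Fin 3) ℤ) 1 1 : E) = lam)) ∧
    (∀ lam : E,
      ((M : Matrix (Fin 3) (Fin 3) ℤ).map ((↑) : ℤ → E)).mulVec ![β, 1, 0] =
        lam • ![β, 1, 0] →
      (IsIntegral ℤ lam ∧ IsIntegral ℤ lam⁻¹) ∧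
      ((Matrix.of fun i j : Fin 2 =>
          (M : Matrix (Fin 3) (Fin 3) ℤ) i.castSucc j.castSucc).det = 1 ∨
       (Matrix.of fun i j : Fin 2 =>
          (M : Matrix (Fin 3) (Fin 3) ℤ) i.castSucc j.castSucc).det = -1) ∧
      ((M : Matrix (Fin 3) (Fin 3) ℤ) 2 2 = 1 ∨ (M : Matrix (Fin 3) (Fin 3) ℤ) 2 2 = -1)) := by
  haveI : CharZero E := charZero_of_injective_algebraMap (algebraMap ℚ E).injective
  set A : Matrix (Fin 3) (Fin 3) ℤ := (M : Matrix (Fin 3) (Fin 3) ℤ) with hA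
  have hvec : ∀ lam : E,
      (A.map ((↑) : ℤ → E)).mulVec ![β, 1, 0] = lam • ![β, 1, 0] ↔
      ((A 0 0 : E) * β + (A 0 1 : E) = lam * β ∧
       (A 1 0 : E) * β + (A 1 1 : E) = lam ∧
       (A 2 0 : E) * β + (A 2 1 : E) = 0) := by
    intro lam
    rw [funext_iff]
    constructor
    · intro h
      have h0 := h 0; have h1 := h 1; have h2 := h 2
      simp [Matrix.mulVec, dotProduct, Fin.sum_univ_three, Matrix.map_apply] at h0 h1 h2
      exact ⟨by linear_combination h0, by linear_combination h1, by linear_combination h2⟩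
    · rintro ⟨h0, h1, h2⟩ i
      fin_cases i
      · simp [Matrix.mulVec, dotProduct, Fin.sum_univ_three, Matrix.map_apply]
        linear_combination h0
      · simp [Matrix.mulVec, dotProduct, Fin.sum_univ_three, Matrix.map_apply]
        linear_combination h1
      · simp [Matrix.mulVec, dotProduct, Fin.sum_univ_three, Matrix.map_apply]
        linear_combination h2
  have hdet2 : (Matrix.of fun i j : Fin 2 => A i.castSucc j.castSucc).det
      = A 0 0 * A 1 1 - A 0 1 * A 1 0 := by
    rw [Matrix.det_fin_two]; rfl
  constructor
  · constructor
    · rintro ⟨lam, h⟩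
      obtain ⟨h0, h1, h2⟩ := (hvec lam).mp h
      obtain ⟨ha, hb⟩ := aux_key β hβ _ _ h2
      exact ⟨ha, hb, lam, h0, h1⟩
    · rintro ⟨ha, hb, lam, h0, h1⟩
      refine ⟨lam, (hvec lam).mpr ⟨h0, h1, ?_⟩⟩
      rw [ha, hb]; simp
  · intro lam h
    obtain ⟨h0, h1, h2⟩ := (hvec lam).mp h
    obtain ⟨ha, hb⟩ := aux_key β hβ _ _ h2
    have hfact : (A 0 0 * A 1 1 - A 0 1 * A 1 0) * A 2 2 = 1 := by
      have h3 : A.det = 1 := M.property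
      rw [Matrix.det_fin_three] at h3
      rw [← h3, ha, hb]; ring
    have hd : A 0 0 * A 1 1 - A 0 1 * A 1 0 = 1 ∨ A 0 0 * A 1 1 - A 0 1 * A 1 0 = -1 :=
      Int.isUnit_iff.mp (IsUnit.of_mul_eq_one _ hfact)
    have hm33 : A 2 2 = 1 ∨ A 2 2 = -1 :=
      Int.isUnit_iff.mp (IsUnit.of_mul_eq_one (A 0 0 * A 1 1 - A 0 1 * A 1 0) (by linear_combination hfact))
    have key : lam ^ 2 - ((A 0 0 + A 1 1 : ℤ) : E) * lam
        + ((A 0 0 * A 1 1 - A 0 1 * A 1 0 : ℤ) : E) = 0 := by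
      push_cast
      linear_combination (-(A 1 0 : E)) * h0 + ((A 0 0 : E) - lam) * h1
    have hlam : lam ≠ 0 := by
      intro hz
      rw [hz] at h1
      obtain ⟨hc, hdz⟩ := aux_key β hβ _ _ h1
      rw [hc, hdz] at hd
      simp at hd
    have hinv : lam * lam⁻¹ = 1 := mul_inv_cancel₀ hlam
    have hint1 : IsIntegral ℤ lam :=
      aux_int_s10 lam (A 0 0 + A 1 1) (A 0 0 * A 1 1 - A 0 1 * A 1 0) key
    have hint2 : IsIntegral ℤ lam⁻¹ := by
      rcases hd with hd | hd
      · rw [hd] at key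
        apply aux_int_s10 lam⁻¹ (A 0 0 + A 1 1) 1
        push_cast at key ⊢
        linear_combination lam⁻¹ ^ 2 * key +
          (((A 0 0 : E) + (A 1 1 : E)) * lam⁻¹ - lam * lam⁻¹ - 1) * hinv
      · rw [hd] at key
        apply aux_int_s10 lam⁻¹ (-(A 0 0 + A 1 1)) (-1)
        push_cast at key ⊢
        linear_combination (-(lam⁻¹ ^ 2)) * key +
          (lam * lam⁻¹ + 1 - ((A 0 0 : E) + (A 1 1 : E)) * lam⁻¹) * hinv
    exact ⟨⟨hint1, hint2⟩, by rw [hdet2]; exact hd, hm33⟩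
end

section
/- Let p be an odd prime. Then the number of orbits of Γ₁(p,p)^* acting on the projective line ℙ¹(ℚ) equals p − 1. -/
/-- The projective line `ℙ¹(ℚ)`: the set of `1`-dimensional `ℚ`-subspaces of `ℚ²`. -/
def ProjLineQ : Type := {L : Submodule ℚ (Fin 2 → ℚ) // Module.finrank ℚ L = 1}

/-- The orbit relation on `ℙ¹(ℚ)` for the group `Γ₁(M,Δ)^*` of integer matrices
`g = [[a,b],[c,D]]` with `det g = ±1`, `c ≡ 0 (mod M)` and `a ≡ det g (mod Δ)`. -/
def relGamma1Star (M Δ : ℕ) (L L' : ProjLineQ) : Prop :=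
  ∃ g : Matrix (Fin 2) (Fin 2) ℤ, (g.det = 1 ∨ g.det = -1) ∧ (M : ℤ) ∣ g 1 0 ∧
    (Δ : ℤ) ∣ (g 0 0 - g.det) ∧
    Submodule.map (Matrix.mulVecLin (g.map ((↑) : ℤ → ℚ))) L.1 = L'.1

namespace Stmt12Aux

open Submodule Matrix

noncomputable def ivec (a c : ℤ) : Fin 2 → ℚ := ![(a:ℚ), (c:ℚ)]

lemma ivec_ne_zero {a c : ℤ} (h : IsCoprime a c) : ivec a c ≠ 0 := by
  intro hv
  have h0 : (a : ℚ) = 0 := congrFun hv 0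
  have h1 : (c : ℚ) = 0 := congrFun hv 1
  have : a = 0 := by exact_mod_cast h0
  have : c = 0 := by exact_mod_cast h1
  subst this; subst ‹a = 0›
  exact not_isCoprime_zero_zero h

lemma map_span_ivec (g : Matrix (Fin 2) (Fin 2) ℤ) (a c : ℤ) :
    Submodule.map (Matrix.mulVecLin (g.map ((↑) : ℤ → ℚ))) (span ℚ {ivec a c})
      = span ℚ {ivec (g 0 0 * a + g 0 1 * c) (g 1 0 * a + g 1 1 * c)} := by
  have hv : (Matrix.mulVecLin (g.map ((↑) : ℤ → ℚ))) (ivec a c)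
      = ivec (g 0 0 * a + g 0 1 * c) (g 1 0 * a + g 1 1 * c) := by
    funext i
    fin_cases i <;>
      simp [ivec, Matrix.mulVec, dotProduct, Fin.sum_univ_two, mul_comm]
  rw [Submodule.map_span, Set.image_singleton, hv]

lemma scal_pm {a c a' c' : ℤ} (h : IsCoprime a c) (h' : IsCoprime a' c') {z : ℚ}
    (h1 : z * a = a') (h2 : z * c = c') :
    (a' = a ∧ c' = c) ∨ (a' = -a ∧ c' = -c) := by
  obtain ⟨u, v, huv⟩ := h
  obtain ⟨x, y, hxy⟩ := h'
  set m : ℤ := u * a' + v * c' with hm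
  have hz : z = (m : ℤ) := by
    have : z * ((u:ℚ) * a + v * c) = (u:ℚ) * a' + v * c' := by
      rw [mul_add, ← mul_assoc, ← mul_assoc, mul_comm z (u:ℚ), mul_comm z (v:ℚ),
        mul_assoc, mul_assoc, h1, h2]
    have huv' : (u:ℚ) * a + v * c = 1 := by exact_mod_cast congrArg (Int.cast : ℤ → ℚ) huv
    rw [huv', mul_one] at this
    rw [this]; norm_cast
  set n : ℤ := x * a + y * c with hn
  have hmn : m * n = 1 := by
    have : ((x:ℚ) * a' + y * c') = z * ((x:ℚ) * a + y * c) := by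
      rw [← h1, ← h2]; ring
    have hxy' : (x:ℚ) * a' + y * c' = 1 := by exact_mod_cast congrArg (Int.cast : ℤ → ℚ) hxy
    rw [hxy', hz] at this
    exact_mod_cast this.symm
  rcases Int.mul_eq_one_iff_eq_one_or_neg_one.mp hmn with ⟨hm1, _⟩ | ⟨hm1, _⟩
  · left
    constructor
    · have : (a' : ℚ) = ((a : ℤ) : ℚ) := by rw [← h1, hz, hm1]; push_cast; ring
      exact_mod_cast this
    · have : (c' : ℚ) = ((c : ℤ) : ℚ) := by rw [← h2, hz, hm1]; push_cast; ring
      exact_mod_cast this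
  · right
    constructor
    · have : (a' : ℚ) = ((-a : ℤ) : ℚ) := by rw [← h1, hz, hm1]; push_cast; ring
      exact_mod_cast this
    · have : (c' : ℚ) = ((-c : ℤ) : ℚ) := by rw [← h2, hz, hm1]; push_cast; ring
      exact_mod_cast this

lemma span_eq_pm {a c a' c' : ℤ} (h : IsCoprime a c) (h' : IsCoprime a' c')
    (hs : span ℚ {ivec a c} = span ℚ {ivec a' c'}) :
    (a' = a ∧ c' = c) ∨ (a' = -a ∧ c' = -c) := by
  rw [Submodule.span_singleton_eq_span_singleton] at hs
  obtain ⟨z, hz⟩ := hs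
  have h1 : (z : ℚ) * a = a' := by
    have := congrFun hz 0; simpa [ivec, Units.smul_def] using this
  have h2 : (z : ℚ) * c = c' := by
    have := congrFun hz 1; simpa [ivec, Units.smul_def] using this
  exact scal_pm h h' h1 h2

lemma exists_prim (L : ProjLineQ) : ∃ a c : ℤ, IsCoprime a c ∧ L.1 = span ℚ {ivec a c} := by
  classical
  obtain ⟨v, hv0, hv⟩ := finrank_eq_one_iff'.mp L.2
  have hL : L.1 = span ℚ {(v : Fin 2 → ℚ)} := by
    apply le_antisymm
    · intro w hw
      obtain ⟨t, ht⟩ := hv ⟨w, hw⟩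
      have : w = t • (v : Fin 2 → ℚ) := by
        have := congrArg (Subtype.val) ht
        exact this.symm
      rw [this]
      exact Submodule.smul_mem _ _ (Submodule.subset_span rfl)
    · rw [Submodule.span_le, Set.singleton_subset_iff]
      exact v.2
  have hvne : (v : Fin 2 → ℚ) ≠ 0 := fun hc => hv0 (Subtype.ext hc)
  set q0 : ℚ := (v : Fin 2 → ℚ) 0 with hq0
  set q1 : ℚ := (v : Fin 2 → ℚ) 1 with hq1
  set x : ℤ := q0.num * q1.den with hx
  set y : ℤ := q1.num * q0.den with hy
  have hxy0 : ¬(x = 0 ∧ y = 0) := by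
    rintro ⟨hx0, hy0⟩
    apply hvne
    have e0 : q0 = 0 := by
      have : q0.num = 0 := by
        rcases mul_eq_zero.mp hx0 with h | h
        · exact h
        · exact absurd h (by exact_mod_cast q1.den_nz)
      exact Rat.zero_of_num_zero this
    have e1 : q1 = 0 := by
      have : q1.num = 0 := by
        rcases mul_eq_zero.mp hy0 with h | h
        · exact h
        · exact absurd h (by exact_mod_cast q0.den_nz)
      exact Rat.zero_of_num_zero this
    funext i
    fin_cases i
    · exact e0
    · exact e1
  have hgpos : 0 < Int.gcd x y := by
    rcases Nat.eq_zero_or_pos (Int.gcd x y) with h | h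
    · exact absurd ⟨Int.gcd_eq_zero_iff.mp h |>.1, Int.gcd_eq_zero_iff.mp h |>.2⟩ hxy0
    · exact h
  set g : ℤ := (Int.gcd x y : ℤ) with hg
  have hgne : (g : ℚ) ≠ 0 := by
    simp [hg]
    omega
  set a : ℤ := x / g with ha
  set c : ℤ := y / g with hc
  have hcop : IsCoprime a c := by
    rw [Int.isCoprime_iff_gcd_eq_one]
    exact Int.gcd_div_gcd_div_gcd (by exact_mod_cast hgpos)
  have hax : a * g = x := Int.ediv_mul_cancel (Int.gcd_dvd_left x y)
  have hcy : c * g = y := Int.ediv_mul_cancel (Int.gcd_dvd_right x y)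
  refine ⟨a, c, hcop, ?_⟩
  rw [hL]
  rw [Submodule.span_singleton_eq_span_singleton]
  have hden0 : ((q0.den : ℚ)) ≠ 0 := by exact_mod_cast q0.den_nz
  have hden1 : ((q1.den : ℚ)) ≠ 0 := by exact_mod_cast q1.den_nz
  set t : ℚ := (q0.den * q1.den : ℚ) / g with htdef
  have htne : t ≠ 0 := by
    apply div_ne_zero _ hgne
    exact mul_ne_zero hden0 hden1
  refine ⟨Units.mk0 t htne, ?_⟩
  funext i
  fin_cases i <;> simp [ivec, Units.smul_def]
  · have hq : (a : ℚ) * g = (q0.num * q1.den : ℚ) := by exact_mod_cast hax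
    have hnum : (q0.num : ℚ) = q0 * q0.den := (div_eq_iff hden0).mp (Rat.num_div_den q0)
    rw [htdef, ← hq0, div_mul_eq_mul_div, div_eq_iff hgne]
    linear_combination (-(q1.den : ℚ)) * hnum - hq
  · have hq : (c : ℚ) * g = (q1.num * q0.den : ℚ) := by exact_mod_cast hcy
    have hnum : (q1.num : ℚ) = q1 * q1.den := (div_eq_iff hden1).mp (Rat.num_div_den q1)
    rw [htdef, ← hq1, div_mul_eq_mul_div, div_eq_iff hgne]
    linear_combination (-(q0.den : ℚ)) * hnum - hq

variable (p : ℕ) [Fact p.Prime]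

abbrev Q := (ZMod p)ˣ ⧸ Subgroup.zpowers (-1 : (ZMod p)ˣ)

noncomputable def cls (n : ℤ) : Q p :=
  QuotientGroup.mk (if h : (n : ZMod p) = 0 then 1 else Units.mk0 _ h)

open scoped Classical in
noncomputable def finv (a c : ℤ) : Bool × Q p :=
  if (p:ℤ) ∣ c then (true, cls p a) else (false, cls p c)

lemma cls_eq_of_eq {m n : ℤ} (h : (m : ZMod p) = n) : cls p m = cls p n := by
  unfold cls; congr 1; rw [h]

lemma neg_one_inv : ((-1 : (ZMod p)ˣ))⁻¹ = -1 := by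
  rw [inv_eq_iff_mul_eq_one]; simp

lemma cls_eq_of_neg {m n : ℤ} (h : (m : ZMod p) = -n) : cls p m = cls p n := by
  unfold cls
  by_cases h0 : (n : ZMod p) = 0
  · rw [h, h0]; simp
  · have hm0 : (m : ZMod p) ≠ 0 := by rw [h]; simpa using h0
    rw [dif_neg hm0, dif_neg h0]
    rw [QuotientGroup.eq]
    have hu : Units.mk0 _ hm0 = (-1) * Units.mk0 _ h0 := Units.ext (by simp [h])
    refine ⟨1, ?_⟩
    show ((-1 : (ZMod p)ˣ)) ^ (1:ℤ) = _
    rw [zpow_one, hu, _root_.mul_inv_rev, neg_one_inv]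
    refine Eq.symm ?_
    calc (Units.mk0 _ h0)⁻¹ * -1 * Units.mk0 _ h0
        = -((Units.mk0 _ h0)⁻¹ * Units.mk0 _ h0) := by rw [mul_neg, neg_mul, mul_one]
      _ = -1 := by rw [inv_mul_cancel]

lemma cls_inj {m n : ℤ} (hm : (m : ZMod p) ≠ 0) (hn : (n : ZMod p) ≠ 0)
    (h : cls p m = cls p n) : (m : ZMod p) = n ∨ (m : ZMod p) = -n := by
  unfold cls at h
  rw [dif_neg hm, dif_neg hn, QuotientGroup.eq] at h
  obtain ⟨k, hk⟩ := h
  dsimp only at hk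
  rcases Int.even_or_odd k with he | ho
  · rw [he.neg_one_zpow] at hk
    left
    have : (Units.mk0 _ hm) = Units.mk0 _ hn := inv_mul_eq_one.mp hk.symm
    simpa using congrArg Units.val this
  · have hoz : ((-1 : (ZMod p)ˣ)) ^ k = -1 := by
      obtain ⟨t, rfl⟩ := ho
      rw [_root_.zpow_add, zpow_one, _root_.zpow_mul]
      have h2 : ((-1 : (ZMod p)ˣ)) ^ (2:ℤ) = 1 := by rw [zpow_two]; simp
      rw [h2, _root_.one_zpow, one_mul]
    rw [hoz] at hk
    right
    have h2 : Units.mk0 _ hn = -Units.mk0 _ hm := by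
      have := congrArg (fun x => (Units.mk0 (m:ZMod p) hm) * x) hk
      rw [mul_neg_one, ← mul_assoc, mul_inv_cancel, one_mul] at this
      exact this.symm
    have := congrArg Units.val h2
    simp at this
    rw [this]; ring

lemma dvd_iff_cast_eq {m n : ℤ} : (m : ZMod p) = n ↔ (p:ℤ) ∣ (m - n) := by
  rw [← sub_eq_zero, ← Int.cast_sub, ZMod.intCast_zmod_eq_zero_iff_dvd]

lemma forward {a c a' c' : ℤ} (h : IsCoprime a c) (h' : IsCoprime a' c')
    (g : Matrix (Fin 2) (Fin 2) ℤ) (hdet : g.det = 1 ∨ g.det = -1)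
    (hc10 : (p:ℤ) ∣ g 1 0) (hd : (p:ℤ) ∣ (g 0 0 - g.det))
    (hmap : Submodule.map (Matrix.mulVecLin (g.map ((↑) : ℤ → ℚ))) (span ℚ {ivec a c})
      = span ℚ {ivec a' c'}) :
    finv p a c = finv p a' c' := by
  classical
  set e : ℤ := g.det with he
  have h3 : e = g 0 0 * g 1 1 - g 0 1 * g 1 0 := Matrix.det_fin_two g
  have h2 : e * e = 1 := by rcases hdet with h | h <;> rw [← he] at * <;> rw [h] <;> norm_num
  obtain ⟨u, v, huv⟩ := h
  set w0 : ℤ := g 0 0 * a + g 0 1 * c with hw0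
  set w1 : ℤ := g 1 0 * a + g 1 1 * c with hw1
  have hwcop : IsCoprime w0 w1 := by
    refine ⟨u*e*(g 1 1) - v*e*(g 1 0), v*e*(g 0 0) - u*e*(g 0 1), ?_⟩
    rw [hw0, hw1]
    linear_combination (e * (g 0 0 * g 1 1 - g 0 1 * g 1 0)) * huv - e * h3 + h2
  rw [map_span_ivec] at hmap
  have hpm := span_eq_pm hwcop h' hmap
  obtain ⟨k, hk⟩ := hc10
  obtain ⟨l, hl⟩ := hd
  have hδ : (p:ℤ) ∣ (g 1 1 - 1) := by
    refine ⟨e * (g 0 1 * k - l * g 1 1), ?_⟩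
    linear_combination (e * g 0 1) * hk - (e * g 1 1) * hl - e * h3 - (g 1 1 - 1) * h2
  have hw1c : (p:ℤ) ∣ (w1 - c) := by
    have hfe : w1 - c = g 1 0 * a + (g 1 1 - 1) * c := by rw [hw1]; ring
    rw [hfe, hk]
    exact dvd_add ⟨k * a, by ring⟩ (Dvd.dvd.mul_right hδ c)
  have hZ1 : ((w1 : ℤ) : ZMod p) = (c : ZMod p) := (dvd_iff_cast_eq p).mpr hw1c
  have key : ∀ t x y : ℤ, (t = 1 ∨ t = -1) →
      ((x : ZMod p)) = ((t:ℤ):ZMod p) * (y : ZMod p) → cls p y = cls p x := by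
    intro t x y ht hxy
    rcases ht with rfl | rfl
    · push_cast at hxy
      exact (cls_eq_of_eq p (by rw [hxy]; ring)).symm
    · push_cast at hxy
      exact (cls_eq_of_neg p (by rw [hxy]; ring)).symm
  by_cases hpc : (p:ℤ) ∣ c
  · have hw0a : (p:ℤ) ∣ (w0 - e * a) := by
      have hfe : w0 - e * a = (g 0 0 - e) * a + g 0 1 * c := by rw [hw0]; ring
      rw [hfe]
      exact dvd_add (Dvd.dvd.mul_right ⟨l, hl⟩ a) (Dvd.dvd.mul_left hpc _)
    have hZ0 : ((w0 : ℤ) : ZMod p) = ((e : ℤ) : ZMod p) * (a : ZMod p) := by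
      have h5 := (dvd_iff_cast_eq p).mpr hw0a
      push_cast at h5 ⊢
      exact h5
    have hc0 : ((c : ℤ) : ZMod p) = 0 := by
      rw [ZMod.intCast_zmod_eq_zero_iff_dvd]; exact hpc
    have hpw1 : (p:ℤ) ∣ w1 := by
      rw [← ZMod.intCast_zmod_eq_zero_iff_dvd, hZ1]; exact hc0
    rcases hpm with ⟨ha', hc'⟩ | ⟨ha', hc'⟩
    · have hpc' : (p:ℤ) ∣ c' := hc' ▸ hpw1
      have hx : ((a' : ℤ) : ZMod p) = ((e:ℤ) : ZMod p) * (a : ZMod p) := by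
        rw [ha', hZ0]
      rw [finv, finv, if_pos hpc, if_pos hpc', key e a' a hdet hx]
    · have hpc' : (p:ℤ) ∣ c' := by rw [hc']; exact hpw1.neg_right
      have hne : (-e = 1 ∨ -e = -1) := by rcases hdet with h1 | h1 <;> simp [h1]
      have hx : ((a' : ℤ) : ZMod p) = (((-e):ℤ) : ZMod p) * (a : ZMod p) := by
        rw [ha']; push_cast; rw [hZ0]; push_cast; ring
      rw [finv, finv, if_pos hpc, if_pos hpc', key (-e) a' a hne hx]
  · have hcne : ¬ ((c : ℤ) : ZMod p) = 0 := by
      rw [ZMod.intCast_zmod_eq_zero_iff_dvd]; exact hpc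
    rcases hpm with ⟨ha', hc'⟩ | ⟨ha', hc'⟩
    · have hZc' : ((c' : ℤ) : ZMod p) = (c : ZMod p) := by rw [hc']; exact hZ1
      have hpc' : ¬ (p:ℤ) ∣ c' := by
        rw [← ZMod.intCast_zmod_eq_zero_iff_dvd, hZc']; exact hcne
      rw [finv, finv, if_neg hpc, if_neg hpc', cls_eq_of_eq p hZc'.symm]
    · have hZc' : ((c' : ℤ) : ZMod p) = -(c : ZMod p) := by
        rw [hc']; push_cast; rw [hZ1]
      have hpc' : ¬ (p:ℤ) ∣ c' := by
        rw [← ZMod.intCast_zmod_eq_zero_iff_dvd, hZc', neg_eq_zero]; exact hcne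
      rw [finv, finv, if_neg hpc, if_neg hpc',
        cls_eq_of_neg p (by rw [hZc']; ring : ((c : ℤ) : ZMod p) = -((c' : ℤ) : ZMod p))]

lemma span_neg (a c : ℤ) : span ℚ {ivec (-a) (-c)} = span ℚ {ivec a c} := by
  rw [Submodule.span_singleton_eq_span_singleton]
  refine ⟨-1, ?_⟩
  funext i
  fin_cases i <;> simp [ivec, Units.smul_def]

omit [Fact p.Prime] in
lemma mk_g {a c a' c' b d b' d' : ℤ} (h1 : a*d - b*c = 1) (h2 : a'*d' - b'*c' = 1)
    (hg10 : (p:ℤ) ∣ (c'*d - d'*c)) (hg00 : (p:ℤ) ∣ (a'*d - b'*c - 1)) :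
    ∃ g : Matrix (Fin 2) (Fin 2) ℤ, (g.det = 1 ∨ g.det = -1) ∧ (p:ℤ) ∣ g 1 0 ∧
      (p:ℤ) ∣ (g 0 0 - g.det) ∧
      Submodule.map (Matrix.mulVecLin (g.map ((↑) : ℤ → ℚ))) (span ℚ {ivec a c})
        = span ℚ {ivec a' c'} := by
  refine ⟨!![a'*d - b'*c, b'*a - a'*b; c'*d - d'*c, d'*a - c'*b], ?_⟩
  have hdet : (!![a'*d - b'*c, b'*a - a'*b; c'*d - d'*c, d'*a - c'*b] :
      Matrix (Fin 2) (Fin 2) ℤ).det = 1 := by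
    rw [Matrix.det_fin_two_of]
    linear_combination (a'*d' - b'*c') * h1 + h2
  refine ⟨Or.inl hdet, ?_, ?_, ?_⟩
  · simpa using hg10
  · rw [hdet]; simpa using hg00
  · rw [map_span_ivec]
    have e0 : (!![a'*d - b'*c, b'*a - a'*b; c'*d - d'*c, d'*a - c'*b] :
        Matrix (Fin 2) (Fin 2) ℤ) 0 0 * a
        + (!![a'*d - b'*c, b'*a - a'*b; c'*d - d'*c, d'*a - c'*b] :
        Matrix (Fin 2) (Fin 2) ℤ) 0 1 * c = a' := by
      simp
      linear_combination a' * h1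
    have e1 : (!![a'*d - b'*c, b'*a - a'*b; c'*d - d'*c, d'*a - c'*b] :
        Matrix (Fin 2) (Fin 2) ℤ) 1 0 * a
        + (!![a'*d - b'*c, b'*a - a'*b; c'*d - d'*c, d'*a - c'*b] :
        Matrix (Fin 2) (Fin 2) ℤ) 1 1 * c = c' := by
      simp
      linear_combination c' * h1
    rw [e0, e1]

omit [Fact p.Prime] in
lemma bezout {a c : ℤ} (h : IsCoprime a c) : ∃ b d : ℤ, a * d - b * c = 1 := by
  obtain ⟨v, u, hvu⟩ := h
  exact ⟨-u, v, by linear_combination hvu⟩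

omit [Fact p.Prime] in
lemma build1 {a c a' c' : ℤ} (h : IsCoprime a c) (h' : IsCoprime a' c')
    (hpc : (p:ℤ) ∣ c) (hpc' : (p:ℤ) ∣ c') (haa : (p:ℤ) ∣ (a' - a)) :
    ∃ g : Matrix (Fin 2) (Fin 2) ℤ, (g.det = 1 ∨ g.det = -1) ∧ (p:ℤ) ∣ g 1 0 ∧
      (p:ℤ) ∣ (g 0 0 - g.det) ∧
      Submodule.map (Matrix.mulVecLin (g.map ((↑) : ℤ → ℚ))) (span ℚ {ivec a c})
        = span ℚ {ivec a' c'} := by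
  obtain ⟨b, d, h1⟩ := bezout h
  obtain ⟨b', d', h2⟩ := bezout h'
  apply mk_g p h1 h2
  · exact dvd_sub (hpc'.mul_right d) (hpc.mul_left d')
  · have : a'*d - b'*c - 1 = (a' - a)*d + (b - b')*c := by linear_combination h1
    rw [this]
    exact dvd_add (haa.mul_right d) (hpc.mul_left (b - b'))

lemma build2 {a c a' c' : ℤ} (h : IsCoprime a c) (h' : IsCoprime a' c')
    (hpc' : ¬ (p:ℤ) ∣ c') (hcc : (p:ℤ) ∣ (c' - c)) :
    ∃ g : Matrix (Fin 2) (Fin 2) ℤ, (g.det = 1 ∨ g.det = -1) ∧ (p:ℤ) ∣ g 1 0 ∧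
      (p:ℤ) ∣ (g 0 0 - g.det) ∧
      Submodule.map (Matrix.mulVecLin (g.map ((↑) : ℤ → ℚ))) (span ℚ {ivec a c})
        = span ℚ {ivec a' c'} := by
  obtain ⟨b, d, h1⟩ := bezout h
  obtain ⟨b0, d0, h2⟩ := bezout h'
  have hcop : IsCoprime ((p:ℤ)) c' :=
    (Nat.prime_iff_prime_int.mp (Fact.out)).coprime_iff_not_dvd.mpr hpc'
  obtain ⟨s, t, hst⟩ := hcop
  set k : ℤ := t * (d - d0) with hkdef
  set d' : ℤ := d0 + k * c' with hd'def
  set b' : ℤ := b0 + k * a' with hb'def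
  have h2' : a' * d' - b' * c' = 1 := by
    rw [hd'def, hb'def]; linear_combination h2
  have hdd' : (p:ℤ) ∣ (d - d') := by
    refine ⟨(d - d0) * s, ?_⟩
    rw [hd'def, hkdef]
    linear_combination (-(d - d0)) * hst
  apply mk_g p h1 h2'
  · have : c'*d - d'*c = (c' - c)*d + (d - d')*c := by ring
    rw [this]
    exact dvd_add (hcc.mul_right d) (hdd'.mul_right c)
  · have : a'*d - b'*c - 1 = a'*(d - d') + b'*(c' - c) := by linear_combination h2'
    rw [this]
    exact dvd_add (hdd'.mul_left a') (hcc.mul_left b')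

lemma not_dvd_of_coprime {a c : ℤ} (h : IsCoprime a c) (hpc : (p:ℤ) ∣ c) : ¬ (p:ℤ) ∣ a := by
  intro hpa
  exact (Nat.prime_iff_prime_int.mp (Fact.out : p.Prime)).not_unit (h.isUnit_of_dvd' hpa hpc)

lemma backward {a c a' c' : ℤ} (h : IsCoprime a c) (h' : IsCoprime a' c')
    (hf : finv p a c = finv p a' c') :
    ∃ g : Matrix (Fin 2) (Fin 2) ℤ, (g.det = 1 ∨ g.det = -1) ∧ (p:ℤ) ∣ g 1 0 ∧
      (p:ℤ) ∣ (g 0 0 - g.det) ∧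
      Submodule.map (Matrix.mulVecLin (g.map ((↑) : ℤ → ℚ))) (span ℚ {ivec a c})
        = span ℚ {ivec a' c'} := by
  classical
  unfold finv at hf
  by_cases hpc : (p:ℤ) ∣ c <;> by_cases hpc' : (p:ℤ) ∣ c'
  · rw [if_pos hpc, if_pos hpc'] at hf
    have hcls : cls p a = cls p a' := congrArg Prod.snd hf
    have hane : ((a:ℤ) : ZMod p) ≠ 0 := by
      have hx := not_dvd_of_coprime p h hpc
      rwa [← ZMod.intCast_zmod_eq_zero_iff_dvd] at hx
    have hane' : ((a':ℤ) : ZMod p) ≠ 0 := by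
      have hx := not_dvd_of_coprime p h' hpc'
      rwa [← ZMod.intCast_zmod_eq_zero_iff_dvd] at hx
    rcases cls_inj p hane hane' hcls with hc | hc
    · exact build1 p h h' hpc hpc' ((dvd_iff_cast_eq p).mp hc.symm)
    · have hd : (p:ℤ) ∣ (-a' - a) := by
        have : ((-a' : ℤ) : ZMod p) = (a : ZMod p) := by push_cast; rw [← hc]
        exact (dvd_iff_cast_eq p).mp this
      obtain ⟨g, hg1, hg2, hg3, hg4⟩ :=
        build1 p h (h'.neg_left.neg_right) hpc (hpc'.neg_right) hd
      exact ⟨g, hg1, hg2, hg3, by rw [hg4, span_neg]⟩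
  · rw [if_pos hpc, if_neg hpc'] at hf
    exact absurd (congrArg Prod.fst hf) (by simp)
  · rw [if_neg hpc, if_pos hpc'] at hf
    exact absurd (congrArg Prod.fst hf) (by simp)
  · rw [if_neg hpc, if_neg hpc'] at hf
    have hcls : cls p c = cls p c' := congrArg Prod.snd hf
    have hcne : ((c:ℤ) : ZMod p) ≠ 0 := by
      rwa [← ZMod.intCast_zmod_eq_zero_iff_dvd] at hpc
    have hcne' : ((c':ℤ) : ZMod p) ≠ 0 := by
      rwa [← ZMod.intCast_zmod_eq_zero_iff_dvd] at hpc'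
    rcases cls_inj p hcne hcne' hcls with hc | hc
    · exact build2 p h h' hpc' ((dvd_iff_cast_eq p).mp hc.symm)
    · have hd : (p:ℤ) ∣ (-c' - c) := by
        have : ((-c' : ℤ) : ZMod p) = (c : ZMod p) := by push_cast; rw [← hc]
        exact (dvd_iff_cast_eq p).mp this
      have hpc'' : ¬ (p:ℤ) ∣ (-c') := fun hx => hpc' (dvd_neg.mp hx)
      obtain ⟨g, hg1, hg2, hg3, hg4⟩ :=
        build2 p h (h'.neg_left.neg_right) hpc'' hd
      exact ⟨g, hg1, hg2, hg3, by rw [hg4, span_neg]⟩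

lemma finv_neg (a c : ℤ) : finv p (-a) (-c) = finv p a c := by
  classical
  unfold finv
  by_cases hpc : (p:ℤ) ∣ c
  · rw [if_pos hpc.neg_right, if_pos hpc]
    have : cls p (-a) = cls p a := cls_eq_of_neg p (by push_cast; ring)
    rw [this]
  · rw [if_neg (fun hx => hpc (dvd_neg.mp hx)), if_neg hpc]
    have : cls p (-c) = cls p c := cls_eq_of_neg p (by push_cast; ring)
    rw [this]

lemma finv_welldef {a c a' c' : ℤ} (h : IsCoprime a c) (h' : IsCoprime a' c')
    (hs : span ℚ {ivec a c} = span ℚ {ivec a' c'}) :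
    finv p a c = finv p a' c' := by
  rcases span_eq_pm h h' hs with ⟨rfl, rfl⟩ | ⟨rfl, rfl⟩
  · rfl
  · exact (finv_neg p a c).symm

lemma finv_surj (t : Bool × Q p) : ∃ a c : ℤ, IsCoprime a c ∧ finv p a c = t := by
  classical
  obtain ⟨b, q⟩ := t
  obtain ⟨u, rfl⟩ := Quotient.exists_rep q
  set n : ℤ := (((u : ZMod p).val : ℕ) : ℤ) with hndef
  have hn : ((n : ℤ) : ZMod p) = (u : ZMod p) := by
    rw [hndef]
    push_cast
    exact ZMod.natCast_rightInverse (u : ZMod p)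
  have hne : ((n : ℤ) : ZMod p) ≠ 0 := by rw [hn]; exact u.ne_zero
  have hnd : ¬ (p:ℤ) ∣ n := fun hd => hne ((ZMod.intCast_zmod_eq_zero_iff_dvd n p).mpr hd)
  have hcls : cls p n = QuotientGroup.mk u := by
    unfold cls
    rw [dif_neg hne]
    congr 1
    exact Units.ext (by rw [Units.val_mk0, hn])
  cases b
  · refine ⟨1, n, isCoprime_one_left, ?_⟩
    rw [finv, if_neg hnd, hcls]
  · refine ⟨n, (p:ℤ), ?_, ?_⟩
    · exact ((Nat.prime_iff_prime_int.mp (Fact.out : p.Prime)).coprime_iff_not_dvd.mpr hnd).symm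
    · rw [finv, if_pos dvd_rfl, hcls]

lemma card_Q [Fact (2 < p)] : Nat.card (Q p) * 2 = p - 1 := by
  have h1 : Nat.card (ZMod p)ˣ = p - 1 := by
    rw [Nat.card_eq_fintype_card, ZMod.card_units_eq_totient, Nat.totient_prime Fact.out]
  have horder : orderOf (-1 : (ZMod p)ˣ) = 2 := by
    apply orderOf_eq_prime
    · simp
    · intro hcon
      exact ZMod.neg_one_ne_one (congrArg Units.val hcon)
  have hc := Subgroup.card_eq_card_quotient_mul_card_subgroup
    (Subgroup.zpowers (-1 : (ZMod p)ˣ))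
  rw [Nat.card_zpowers, horder, h1] at hc
  show Nat.card ((ZMod p)ˣ ⧸ Subgroup.zpowers (-1 : (ZMod p)ˣ)) * 2 = p - 1
  omega

end Stmt12Aux

open Stmt12Aux Submodule in
/-- **Statement 12.** For an odd prime `p`, the number of orbits of `Γ₁(p,p)^*` on
`ℙ¹(ℚ)` equals `p - 1`. -/
theorem stmt_12 (p : ℕ) (hp : p.Prime) (hodd : p ≠ 2) :
    Nat.card (Quot (relGamma1Star p p)) = p - 1 := by
  haveI hFact : Fact p.Prime := ⟨hp⟩
  haveI : Fact (2 < p) := ⟨lt_of_le_of_ne hp.two_le (Ne.symm hodd)⟩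
  classical
  let A : ProjLineQ → ℤ := fun L => (exists_prim L).choose
  let C : ProjLineQ → ℤ := fun L => (exists_prim L).choose_spec.choose
  have hAC : ∀ L : ProjLineQ, IsCoprime (A L) (C L) ∧ L.1 = span ℚ {ivec (A L) (C L)} :=
    fun L => (exists_prim L).choose_spec.choose_spec
  let F : ProjLineQ → Bool × Q p := fun L => finv p (A L) (C L)
  have hF : ∀ L L' : ProjLineQ, relGamma1Star p p L L' → F L = F L' := by
    rintro L L' ⟨g, hdet, h10, h00, hmap⟩
    rw [(hAC L).2, (hAC L').2] at hmap
    exact forward p (hAC L).1 (hAC L').1 g hdet h10 h00 hmap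
  let Φ : Quot (relGamma1Star p p) → Bool × Q p := Quot.lift F hF
  have hsurj : Function.Surjective Φ := by
    intro t
    obtain ⟨a, c, hc, hfc⟩ := finv_surj p t
    set L₀ : ProjLineQ := ⟨span ℚ {ivec a c},
      by simpa using finrank_span_singleton (ivec_ne_zero hc)⟩ with hL₀
    refine ⟨Quot.mk _ L₀, ?_⟩
    show F L₀ = t
    have hsp : span ℚ {ivec (A L₀) (C L₀)} = span ℚ {ivec a c} := ((hAC L₀).2).symm
    rw [show F L₀ = finv p (A L₀) (C L₀) from rfl,
      finv_welldef p (hAC L₀).1 hc hsp, hfc]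
  have hinj : Function.Injective Φ := by
    intro x y
    induction x using Quot.ind with
    | _ L =>
    induction y using Quot.ind with
    | _ L' =>
    intro hFL
    apply Quot.sound
    obtain ⟨g, hg1, hg2, hg3, hg4⟩ :=
      backward p (hAC L).1 (hAC L').1 (hFL : F L = F L')
    refine ⟨g, hg1, hg2, hg3, ?_⟩
    rw [(hAC L).2, (hAC L').2]
    exact hg4
  rw [Nat.card_eq_of_bijective Φ ⟨hinj, hsurj⟩, Nat.card_prod,
    Nat.card_eq_fintype_card (α := Bool), Fintype.card_bool]
  rw [mul_comm]
  exact card_Q p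
end
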